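/- arXiv:1607.07529 — 2 statements merged into one kernel-verified Lean document; each statement's English description precedes it below -/
import Mathlib

section
/- Let p and q be anisotropic quasilinear quadratic forms of dimension ≥ 2 over a field F of characteristic 2. If q_{F(p)} is isotropic, then p₁ is similar to a subform of (q_{F(p)})_an. -/
open scoped BigOperators

namespace QLin

variable (K : Type) [Field K]

/-- Value of the diagonal (quasilinear) quadratic form with coefficients `d` at the vector `v`. -/
def qf {n : ℕ} (d : Fin n → K) (v : Fin n → K) : K := ∑ i, d i * v i ^ 2

/-- The set `D(q)` of values represented by the diagonal form `d`. -/
def Dset {n : ℕ} (d : Fin n → K) : Set K := Set.range (qf K d)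

/-- A diagonal quadratic form is anisotropic if it has no nontrivial zero. -/
def Anis {n : ℕ} (d : Fin n → K) : Prop := ∀ v : Fin n → K, qf K d v = 0 → v = 0

/-- The isotropy index `i₀`: the maximal dimension of a totally isotropic subspace. -/
noncomputable def i0 {n : ℕ} (d : Fin n → K) : ℕ :=
  sSup {m | ∃ W : Submodule K (Fin n → K), (∀ v ∈ W, qf K d v = 0) ∧ Module.finrank K W = m}

/-- Isometry of two diagonal quadratic forms (possibly of different ambient dimensions;
an isometry forces the dimensions to agree). -/
def Isom {n m : ℕ} (d : Fin n → K) (e : Fin m → K) : Prop :=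
  ∃ φ : (Fin n → K) ≃ₗ[K] (Fin m → K), ∀ v, qf K e (φ v) = qf K d v

/-- `r` is a subform of `q` : `q ≅ r ⊥ s` for some form `s`. -/
def Subform {n m : ℕ} (r : Fin n → K) (q : Fin m → K) : Prop :=
  ∃ (k : ℕ) (s : Fin k → K), Isom K q (Fin.append r s)

/-- `d` is similar to `e` : `e ≅ a • d` for some `a ≠ 0`. -/
def Similar {n m : ℕ} (d : Fin n → K) (e : Fin m → K) : Prop :=
  ∃ a : K, a ≠ 0 ∧ Isom K (fun i => a * d i) e

/-- `d` is similar to a subform of `q`. -/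
def SimSubform {n m : ℕ} (d : Fin n → K) (q : Fin m → K) : Prop :=
  ∃ a : K, a ≠ 0 ∧ Subform K (fun i => a * d i) q

/-- Tensor product of diagonal quadratic forms. -/
def tens {n m : ℕ} (d : Fin n → K) (e : Fin m → K) : Fin (n * m) → K :=
  fun k => d (finProdFinEquiv.symm k).1 * e (finProdFinEquiv.symm k).2

/-- `q` is divisible by `π` : `q ≅ π ⊗ r` for some form `r`. -/
def Divisible {n m : ℕ} (π : Fin n → K) (q : Fin m → K) : Prop :=
  ∃ (k : ℕ) (r : Fin k → K), Isom K q (tens K π r)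

/-- The diagonal coefficients of the `s`-fold quasi-Pfister form `⟨⟨a₁,…,a_s⟩⟩ =
`⟨1,a₁⟩ ⊗ ⋯ ⊗ ⟨1,a_s⟩`: the products of the `a i` over all subsets of the index set. -/
def qPfister {s : ℕ} (a : Fin s → K) : Fin (2 ^ s) → K :=
  fun j => ∏ i : Fin s, if Nat.testBit (j : ℕ) (i : ℕ) then a i else 1

/-- `r` is (a representative of) the anisotropic part of `q`:
`r` is anisotropic and `q ≅ i₀(q)·⟨0⟩ ⊥ r`. -/
def IsAnisPart {n m : ℕ} (r : Fin n → K) (q : Fin m → K) : Prop :=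
  Anis K r ∧ ∃ k : ℕ, Isom K q (Fin.append (fun _ : Fin k => (0 : K)) r)

/-- The divisibility index `𝔡₀(q)`: the largest `s` such that the anisotropic part of `q`
is divisible by an `s`-fold quasi-Pfister form. -/
noncomputable def d0 {n : ℕ} (q : Fin n → K) : ℕ :=
  sSup {s | ∃ a : Fin s → K, (∀ i, a i ≠ 0) ∧
    ∃ (k : ℕ) (r : Fin k → K), IsAnisPart K r q ∧ Divisible K (qPfister K a) r}

/-- The norm field `N(q)`: the smallest subfield of `K` containing all squares and all
ratios of nonzero represented values of `q`. -/
def normField {n : ℕ} (d : Fin n → K) : Subfield K :=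
  Subfield.closure ((Set.range fun x : K => x ^ 2) ∪
    {z | ∃ a ∈ Dset K d, ∃ b ∈ Dset K d, b ≠ 0 ∧ z = a / b})

/-- `lndeg(q)`: the base-2 logarithm of the dimension of the norm form of `q`, i.e. the
(unique, when `q` is nonzero) `s` such that some anisotropic `s`-fold quasi-Pfister form
represents exactly the elements of the norm field of `q`. -/
noncomputable def lndeg {n : ℕ} (d : Fin n → K) : ℕ :=
  sInf {s | ∃ a : Fin s → K, (∀ i, a i ≠ 0) ∧ Anis K (qPfister K a) ∧
    Dset K (qPfister K a) = (normField K d : Set K)}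

/-- Base change of a diagonal quadratic form along a field extension `F → K`. -/
def bc (F : Type) [Field F] (K : Type) [Field K] [Algebra F K] {n : ℕ} (d : Fin n → F) :
    Fin n → K := fun i => algebraMap F K (d i)

/-- The defining polynomial of the standard affine chart of the projective quadric `{p = 0}`
attached to a diagonal form `p` of dimension `n + 2` (dehomogenized at the last variable). -/
noncomputable def chartD (F : Type) [Field F] {n : ℕ} (d : Fin (n + 2) → F) :
    MvPolynomial (Fin (n + 1)) F :=
  (∑ i : Fin (n + 1), MvPolynomial.C (d i.castSucc) * MvPolynomial.X i ^ 2) +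
    MvPolynomial.C (d (Fin.last (n + 1)))

/-- `K` is (realizes) the function field `F(p)` of the projective quadric `{p = 0}`:
`K` is generated over `F` by a point `x` of the affine chart of the quadric whose
ideal of relations is exactly the one generated by the defining equation. -/
def IsFunFld (F : Type) [Field F] {n : ℕ} (p : Fin (n + 2) → F) (K : Type) [Field K]
    [Algebra F K] : Prop :=
  ∃ x : Fin (n + 1) → K,
    RingHom.ker (MvPolynomial.aeval x : MvPolynomial (Fin (n + 1)) F →ₐ[F] K) =
      Ideal.span {chartD F p} ∧
    ∀ z : K, ∃ a b : MvPolynomial (Fin (n + 1)) F,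
      MvPolynomial.aeval x b ≠ 0 ∧ z * MvPolynomial.aeval x b = MvPolynomial.aeval x a

/-- The full diagonal polynomial of a diagonal form (the equation of the affine cone). -/
noncomputable def diagPoly (F : Type) [Field F] {n : ℕ} (d : Fin n → F) :
    MvPolynomial (Fin n) F :=
  ∑ i : Fin n, MvPolynomial.C (d i) * MvPolynomial.X i ^ 2

/-- `M` is (realizes) the affine cone function field `F[p]`, i.e. the fraction field of
`F[T₁,…,Tₙ]/(p(T))`. -/
def IsAffFunFld (F : Type) [Field F] {n : ℕ} (p : Fin n → F) (M : Type) [Field M]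
    [Algebra F M] : Prop :=
  ∃ x : Fin n → M,
    RingHom.ker (MvPolynomial.aeval x : MvPolynomial (Fin n) F →ₐ[F] M) =
      Ideal.span {diagPoly F p} ∧
    ∀ z : M, ∃ a b : MvPolynomial (Fin n) F,
      MvPolynomial.aeval x b ≠ 0 ∧ z * MvPolynomial.aeval x b = MvPolynomial.aeval x a

/-- `L` is a purely transcendental field extension of `F`. -/
def IsPurelyTransc (F L : Type) [Field F] [Field L] [Algebra F L] : Prop :=
  ∃ s : Set L, AlgebraicIndependent F (Subtype.val : s → L) ∧
    IntermediateField.adjoin F s = ⊤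

end QLin

namespace QLinAux
open QLin

section Char2
variable {R : Type*} [CommRing R]

theorem add_sq' (h2 : (2 : R) = 0) (a b : R) : (a + b) ^ 2 = a ^ 2 + b ^ 2 := by
  have h : (a + b) ^ 2 = a ^ 2 + b ^ 2 + 2 * (a * b) := by ring
  rw [h, h2]; ring

theorem add_self' (h2 : (2 : R) = 0) (a : R) : a + a = 0 := by
  have : a + a = 2 * a := by ring
  rw [this, h2, zero_mul]

theorem eq_of_add_eq_zero' (h2 : (2 : R) = 0) (a b : R) (h : a + b = 0) : a = b := by
  have := add_self' h2 b
  linear_combination h - this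

theorem sum_sq' (h2 : (2 : R) = 0) {ι : Type*} (s : Finset ι) (f : ι → R) :
    (∑ i ∈ s, f i) ^ 2 = ∑ i ∈ s, (f i) ^ 2 := by
  classical
  induction s using Finset.induction_on with
  | empty => simp
  | insert a s hx ih => simp [Finset.sum_insert hx, add_sq' h2, ih]

end Char2

section QF
variable {K : Type} [Field K]

theorem qf_add (h2K : (2 : K) = 0) {n : ℕ} (d v w : Fin n → K) :
    qf K d (v + w) = qf K d v + qf K d w := by
  simp only [qf, ← Finset.sum_add_distrib]
  refine Finset.sum_congr rfl fun i _ => ?_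
  simp only [Pi.add_apply, add_sq' h2K]
  ring

theorem dset_zero {n : ℕ} (d : Fin n → K) : (0 : K) ∈ Dset K d :=
  ⟨0, by simp [qf]⟩

theorem qf_mem_dset {n : ℕ} (d v : Fin n → K) : qf K d v ∈ Dset K d := ⟨v, rfl⟩

theorem dset_add (h2K : (2 : K) = 0) {n : ℕ} (d : Fin n → K) {a b : K}
    (ha : a ∈ Dset K d) (hb : b ∈ Dset K d) : a + b ∈ Dset K d := by
  obtain ⟨v, rfl⟩ := ha; obtain ⟨w, rfl⟩ := hb
  exact ⟨v + w, (qf_add h2K d v w)⟩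

theorem dset_sq_smul {n : ℕ} (d : Fin n → K) {a : K} (c : K)
    (ha : a ∈ Dset K d) : c ^ 2 * a ∈ Dset K d := by
  obtain ⟨v, rfl⟩ := ha
  refine ⟨c • v, ?_⟩
  simp only [qf, Finset.mul_sum]
  refine Finset.sum_congr rfl fun i _ => ?_
  simp [Pi.smul_apply, smul_eq_mul]; ring

theorem dset_sum (h2K : (2 : K) = 0) {n : ℕ} (d : Fin n → K) {ι : Type*} (s : Finset ι) (f : ι → K)
    (hf : ∀ i ∈ s, f i ∈ Dset K d) : (∑ i ∈ s, f i) ∈ Dset K d := by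
  classical
  induction s using Finset.induction_on with
  | empty => simpa using dset_zero (K := K) d
  | insert a s hx ih =>
    rw [Finset.sum_insert hx]
    exact dset_add h2K d (hf a (Finset.mem_insert_self a s))
      (ih fun i hi => hf i (Finset.mem_insert_of_mem hi))

end QF
section IsomBasic
variable {K : Type} [Field K]

theorem isom_symm {n m : ℕ} {d : Fin n → K} {e : Fin m → K} (h : Isom K d e) :
    Isom K e d := by
  obtain ⟨φ, hφ⟩ := h
  exact ⟨φ.symm, fun v => by rw [← hφ (φ.symm v), φ.apply_symm_apply]⟩

theorem isom_trans {n m k : ℕ} {d : Fin n → K} {e : Fin m → K} {f : Fin k → K}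
    (h1 : Isom K d e) (h2 : Isom K e f) : Isom K d f := by
  obtain ⟨φ, hφ⟩ := h1; obtain ⟨ψ, hψ⟩ := h2
  exact ⟨φ.trans ψ, fun v => by
    simp only [LinearEquiv.trans_apply]; rw [hψ (φ v), hφ v]⟩

theorem qf_comp_equiv {n m : ℕ} (d : Fin m → K) (e : Fin n ≃ Fin m) (v : Fin n → K) :
    qf K d (v ∘ e.symm) = qf K (d ∘ e) v := by
  simp only [qf]
  refine (Fintype.sum_equiv e _ _ fun i => ?_).symm
  simp

/-- reindexing along an equiv is an isometry -/
theorem isom_comp {n m : ℕ} (d : Fin m → K) (e : Fin n ≃ Fin m) :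
    Isom K (d ∘ e) d := by
  refine ⟨{ toFun := fun v => v ∘ e.symm
            invFun := fun w => w ∘ e
            map_add' := fun v w => rfl
            map_smul' := fun c v => rfl
            left_inv := fun v => by funext i; simp
            right_inv := fun w => by funext i; simp }, fun v => ?_⟩
  exact qf_comp_equiv d e v

theorem dset_isom {n m : ℕ} {d : Fin n → K} {e : Fin m → K} (h : Isom K d e) :
    Dset K d = Dset K e := by
  obtain ⟨φ, hφ⟩ := h
  ext z
  constructor
  · rintro ⟨v, rfl⟩; exact ⟨φ v, hφ v⟩
  · rintro ⟨w, rfl⟩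
    exact ⟨φ.symm w, by rw [← hφ (φ.symm w), φ.apply_symm_apply]⟩

theorem anis_isom {n m : ℕ} {d : Fin n → K} {e : Fin m → K} (h : Isom K d e)
    (he : Anis K e) : Anis K d := by
  obtain ⟨φ, hφ⟩ := h
  intro v hv
  have : φ v = 0 := he (φ v) (by rw [hφ v, hv])
  have := congrArg φ.symm this
  simpa using this

theorem anis_cons_tail {m : ℕ} {c : K} {ρ : Fin m → K}
    (h : Anis K (Fin.cons c ρ)) : Anis K ρ := by
  intro v hv
  have h0 : qf K (Fin.cons c ρ) (Fin.cons 0 v) = 0 := by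
    simp only [qf, Fin.sum_univ_succ, Fin.cons_zero, Fin.cons_succ] at hv ⊢
    simpa using hv
  have := h _ h0
  funext i
  have := congrFun this i.succ
  simpa using this

theorem dset_append_zero {k m : ℕ} (r : Fin m → K) :
    Dset K (Fin.append (fun _ : Fin k => (0 : K)) r) = Dset K r := by
  ext z
  constructor
  · rintro ⟨v, rfl⟩
    refine ⟨fun i => v (Fin.natAdd k i), ?_⟩
    simp only [qf, Fin.sum_univ_add, Fin.append_left, Fin.append_right]
    simp
  · rintro ⟨w, rfl⟩
    refine ⟨Fin.append (fun _ => 0) w, ?_⟩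
    simp only [qf, Fin.sum_univ_add, Fin.append_left, Fin.append_right]
    simp

theorem isom_cons_congr (h2K : (2 : K) = 0) {n m : ℕ} (c : K) {d : Fin n → K} {e : Fin m → K}
    (h : Isom K d e) : Isom K (Fin.cons c d) (Fin.cons c e) := by
  obtain ⟨φ, hφ⟩ := h
  refine ⟨{ toFun := fun v => Fin.cons (v 0) (φ (Fin.tail v))
            invFun := fun w => Fin.cons (w 0) (φ.symm (Fin.tail w))
            map_add' := fun v w => by
              have ht : Fin.tail (v + w) = Fin.tail v + Fin.tail w := rfl
              funext i
              refine Fin.cases ?_ (fun j => ?_) i <;>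
                simp [Fin.cons_zero, Fin.cons_succ, ht, map_add]
            map_smul' := fun a v => by
              have ht : Fin.tail (a • v) = a • Fin.tail v := rfl
              funext i
              refine Fin.cases ?_ (fun j => ?_) i <;>
                simp [Fin.cons_zero, Fin.cons_succ, ht, map_smul]
            left_inv := fun v => by
              funext i
              refine Fin.cases ?_ (fun j => ?_) i <;>
                simp [Fin.tail_def]
            right_inv := fun w => by
              funext i
              refine Fin.cases ?_ (fun j => ?_) i <;>
                simp [Fin.tail_def] }, fun v => ?_⟩
  simp only [qf, Fin.sum_univ_succ, Fin.cons_zero, Fin.cons_succ, LinearEquiv.coe_mk,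
    LinearMap.coe_mk, AddHom.coe_mk]
  congr 1
  have := hφ (Fin.tail v)
  simp only [qf] at this
  rw [this]
  rfl

end IsomBasic

section Subform
variable {K : Type} [Field K]

theorem qf_cons {m : ℕ} (c : K) (ρ : Fin m → K) (v : Fin (m + 1) → K) :
    qf K (Fin.cons c ρ) v = c * (v 0) ^ 2 + qf K ρ (Fin.tail v) := by
  simp only [qf, Fin.sum_univ_succ, Fin.cons_zero, Fin.cons_succ]
  rfl

theorem qf_single {n : ℕ} (d : Fin n → K) (i : Fin n) :
    qf K d (Pi.single i (1 : K)) = d i := by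
  simp only [qf, Pi.single_apply]
  rw [Finset.sum_eq_single i]
  · simp
  · intro b _ hb; simp [hb]
  · intro h; exact absurd (Finset.mem_univ i) h

/-- shear isometry: replace coefficient 0 by a represented value -/
theorem shear_isom (h2K : (2 : K) = 0) {m : ℕ} (τ' : Fin (m + 1) → K) (μ : Fin (m + 1) → K)
    (hμ : μ 0 ≠ 0) : Isom K (Fin.cons (qf K τ' μ) (Fin.tail τ')) τ' := by
  refine ⟨{ toFun := fun v => fun j => if j = 0 then μ 0 * v 0 else v j + μ j * v 0
            invFun := fun w => fun j => if j = 0 then w 0 / μ 0 else w j + μ j * (w 0 / μ 0)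
            map_add' := fun v w => by
              funext j; by_cases hj : j = 0 <;> simp [hj] <;> ring
            map_smul' := fun a v => by
              funext j; by_cases hj : j = 0 <;> simp [hj] <;> ring
            left_inv := fun v => by
              funext j
              by_cases hj : j = 0
              · subst hj; simp only [if_pos rfl, if_true]; field_simp
              · simp only [hj, if_false, if_pos rfl, if_true]
                have h0 : μ 0 * v 0 / μ 0 = v 0 := by field_simp
                rw [h0]
                linear_combination add_self' h2K (μ j * v 0)
            right_inv := fun w => by
              funext j
              by_cases hj : j = 0
              · subst hj; simp only [if_pos rfl, if_true]; field_simp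
              · simp only [hj, if_false, if_pos rfl, if_true]
                linear_combination add_self' h2K (μ j * (w 0 / μ 0)) }, fun v => ?_⟩
  simp only [LinearEquiv.coe_mk, Equiv.coe_fn_mk, LinearMap.coe_mk, AddHom.coe_mk]
  rw [qf_cons]
  simp only [qf, Fin.sum_univ_succ, Fin.tail]
  have hne : ∀ j : Fin m, (j.succ : Fin (m+1)) ≠ 0 := fun j => Fin.succ_ne_zero j
  try simp only [if_pos rfl]
  have hsum : ∀ j : Fin m,
      τ' j.succ * (if j.succ = 0 then μ 0 * v 0 else v j.succ + μ j.succ * v 0) ^ 2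
      = τ' j.succ * (v j.succ) ^ 2 + τ' j.succ * (μ j.succ) ^ 2 * (v 0) ^ 2 := by
    intro j
    rw [if_neg (hne j), add_sq' h2K]
    ring
  rw [Finset.sum_congr rfl (fun j _ => hsum j), Finset.sum_add_distrib]
  have : (∑ j : Fin m, τ' j.succ * (μ j.succ) ^ 2 * (v 0) ^ 2)
      = (∑ j : Fin m, τ' j.succ * (μ j.succ) ^ 2) * (v 0) ^ 2 := by
    rw [Finset.sum_mul]
  rw [this]
  simp only [if_true]
  ring

/-- representation lemma: an anisotropic form represents c ≠ 0 iff isometric to ⟨c⟩ ⊥ ρ -/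
theorem rep_cons (h2K : (2 : K) = 0) {m : ℕ} (τ : Fin (m + 1) → K) (c : K) (hc : c ≠ 0)
    (hmem : c ∈ Dset K τ) : ∃ ρ : Fin m → K, Isom K τ (Fin.cons c ρ) := by
  obtain ⟨lam, hlam⟩ := hmem
  have hl : ∃ j, lam j ≠ 0 := by
    by_contra h
    push_neg at h
    have : lam = 0 := funext fun j => h j
    rw [this] at hlam
    simp [qf] at hlam
    exact hc hlam.symm
  obtain ⟨j0, hj0⟩ := hl
  set π : Fin (m+1) ≃ Fin (m+1) := Equiv.swap 0 j0 with hπ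
  set τ' : Fin (m+1) → K := τ ∘ π with hτ'
  set μ : Fin (m+1) → K := lam ∘ π with hμdef
  have hμ0 : μ 0 ≠ 0 := by
    simp only [hμdef, hπ, Function.comp_apply, Equiv.swap_apply_left]
    exact hj0
  have hqτ' : qf K τ' μ = c := by
    rw [← hlam]
    simp only [qf, hτ', hμdef, Function.comp_apply]
    exact Fintype.sum_equiv π _ _ fun i => rfl
  have hshear := shear_isom h2K τ' μ hμ0
  rw [hqτ'] at hshear
  refine ⟨Fin.tail τ', isom_symm (isom_trans hshear ?_)⟩
  have : τ' = τ ∘ π := rfl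
  rw [this]
  exact isom_comp τ π

/-- the second shear: modifying later coefficients by square multiples of the 0th -/
theorem shear2_isom (h2K : (2 : K) = 0) {n k : ℕ} (c : K) (μ w : Fin n → K) (s : Fin k → K) :
    Isom K (Fin.cons c (Fin.append w s))
      (Fin.cons c (Fin.append (fun i => c * (μ i) ^ 2 + w i) s)) := by
  classical
  set S : (Fin (n + k + 1) → K) → K := fun v => ∑ i : Fin n, μ i * v (Fin.castAdd k i).succ
    with hS
  have hSlin_add : ∀ v w', S (v + w') = S v + S w' := by
    intro v w'
    simp only [hS, Pi.add_apply, mul_add, Finset.sum_add_distrib]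
  have hSlin_smul : ∀ (a : K) v, S (a • v) = a * S v := by
    intro a v
    simp only [hS, Pi.smul_apply, smul_eq_mul, Finset.mul_sum]
    exact Finset.sum_congr rfl fun i _ => by ring
  set φf : (Fin (n + k + 1) → K) → (Fin (n + k + 1) → K) :=
    fun v => fun j => if j = 0 then v 0 + S v else v j with hφf
  have hSφ : ∀ v, S (φf v) = S v := by
    intro v
    simp only [hS, hφf]
    exact Finset.sum_congr rfl fun i _ => by
      rw [if_neg (Fin.succ_ne_zero _)]
  refine ⟨{ toFun := φf
            invFun := φf
            map_add' := fun v w' => by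
              funext j
              by_cases hj : j = 0 <;> simp [hφf, hj, hSlin_add] <;> ring
            map_smul' := fun a v => by
              funext j
              by_cases hj : j = 0 <;> simp [hφf, hj, hSlin_smul] <;> ring
            left_inv := fun v => by
              funext j
              by_cases hj : j = 0
              · subst hj
                show (if (0:Fin (n+k+1)) = 0 then φf v 0 + S (φf v) else φf v 0) = v 0
                rw [if_pos rfl, hSφ v]
                have h00 : φf v 0 = v 0 + S v := by
                  show (if (0:Fin (n+k+1)) = 0 then v 0 + S v else v 0) = v 0 + S v
                  rw [if_pos rfl]
                rw [h00]
                linear_combination add_self' h2K (S v)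
              · simp [hφf, hj]
            right_inv := fun v => by
              funext j
              by_cases hj : j = 0
              · subst hj
                show (if (0:Fin (n+k+1)) = 0 then φf v 0 + S (φf v) else φf v 0) = v 0
                rw [if_pos rfl, hSφ v]
                have h00 : φf v 0 = v 0 + S v := by
                  show (if (0:Fin (n+k+1)) = 0 then v 0 + S v else v 0) = v 0 + S v
                  rw [if_pos rfl]
                rw [h00]
                linear_combination add_self' h2K (S v)
              · simp [hφf, hj] }, fun v => ?_⟩
  simp only [LinearEquiv.coe_mk, Equiv.coe_fn_mk, LinearMap.coe_mk, AddHom.coe_mk]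
  rw [qf_cons, qf_cons]
  have h0 : φf v 0 = v 0 + S v := by simp [hφf]
  have htail : ∀ j : Fin (n + k), Fin.tail (φf v) j = Fin.tail v j := by
    intro j
    simp only [Fin.tail, hφf]
    rw [if_neg (Fin.succ_ne_zero _)]
  have htl : Fin.tail (φf v) = Fin.tail v := funext htail
  rw [h0, htl]
  have hqf_append : ∀ (d1 : Fin n → K) (d2 : Fin k → K) (u : Fin (n + k) → K),
      qf K (Fin.append d1 d2) u
      = ∑ i : Fin n, d1 i * (u (Fin.castAdd k i)) ^ 2
        + ∑ i : Fin k, d2 i * (u (Fin.natAdd n i)) ^ 2 := by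
    intro d1 d2 u
    simp only [qf, Fin.sum_univ_add, Fin.append_left, Fin.append_right]
  rw [hqf_append, hqf_append]
  have hSv : (v 0 + S v) ^ 2 = (v 0) ^ 2 + (S v) ^ 2 := add_sq' h2K _ _
  have hS2 : (S v) ^ 2 = ∑ i : Fin n, (μ i) ^ 2 * (Fin.tail v (Fin.castAdd k i)) ^ 2 := by
    rw [hS]
    rw [sum_sq' h2K]
    refine Finset.sum_congr rfl fun i _ => ?_
    have : Fin.tail v (Fin.castAdd k i) = v (Fin.castAdd k i).succ := rfl
    rw [this, mul_pow]
  rw [hSv, hS2]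
  rw [mul_add, Finset.mul_sum]
  have expand : ∑ i : Fin n, (c * (μ i) ^ 2 + w i) * (Fin.tail v (Fin.castAdd k i)) ^ 2
      = ∑ i : Fin n, (c * ((μ i) ^ 2 * (Fin.tail v (Fin.castAdd k i)) ^ 2)
          + w i * (Fin.tail v (Fin.castAdd k i)) ^ 2) := by
    refine Finset.sum_congr rfl fun i _ => by ring
  rw [expand, Finset.sum_add_distrib]
  have cancel : ∀ a b d e : K, a + b + (b + d + e) = a + d + e := by
    intro a b d e
    linear_combination add_self' h2K b
  have := cancel (c * v 0 ^ 2) (∑ i : Fin n, c * ((μ i) ^ 2 * (Fin.tail v (Fin.castAdd k i)) ^ 2))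
    (∑ i : Fin n, w i * (Fin.tail v (Fin.castAdd k i)) ^ 2)
    (∑ i : Fin k, s i * (Fin.tail v (Fin.natAdd n i)) ^ 2)
  linear_combination this

end Subform

section SubCriterion
variable {K : Type} [Field K]

theorem qf_split {m : ℕ} (d : Fin (m + 1) → K) (v : Fin (m + 1) → K) :
    qf K d v = d 0 * (v 0) ^ 2 + qf K (fun i => d i.succ) (fun i => v i.succ) := by
  simp [qf, Fin.sum_univ_succ]

theorem append_empty_isom {m : ℕ} (σ : Fin 0 → K) (τ : Fin m → K) :
    Isom K τ (Fin.append σ τ) := by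
  have hfun : Fin.append σ τ = τ ∘ (finCongr (Nat.zero_add m) : Fin (0 + m) ≃ Fin m) := by
    funext j
    refine Fin.addCases (fun i => i.elim0) (fun i => ?_) j
    rw [Fin.append_right]
    have : (finCongr (Nat.zero_add m) : Fin (0 + m) ≃ Fin m) (Fin.natAdd 0 i) = i := by
      ext; simp
    rw [Function.comp_apply, this]
  rw [hfun]
  exact isom_symm (isom_comp τ (finCongr (Nat.zero_add m)))

theorem append_cons_reindex {n k : ℕ} (σ : Fin (n + 1) → K) (s : Fin k → K) :
    Fin.append σ s
      = (Fin.cons (σ 0) (Fin.append (Fin.tail σ) s)) ∘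
          (finCongr (by omega : n + 1 + k = n + k + 1)) := by
  funext j
  refine Fin.addCases (fun i => ?_) (fun i => ?_) j
  · rw [Fin.append_left]
    refine Fin.cases ?_ (fun i' => ?_) i
    · have h0 : (finCongr (by omega : n + 1 + k = n + k + 1)) (Fin.castAdd k (0 : Fin (n+1)))
          = (0 : Fin (n + k + 1)) := by ext; simp
      rw [Function.comp_apply, h0, Fin.cons_zero]
    · have h1 : (finCongr (by omega : n + 1 + k = n + k + 1)) (Fin.castAdd k i'.succ)
          = Fin.succ (Fin.castAdd k i') := by ext; simp
      rw [Function.comp_apply, h1, Fin.cons_succ, Fin.append_left]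
      rfl
  · rw [Fin.append_right]
    have h2 : (finCongr (by omega : n + 1 + k = n + k + 1)) (Fin.natAdd (n + 1) i)
        = Fin.succ (Fin.natAdd n i) := by ext; simp; omega
    rw [Function.comp_apply, h2, Fin.cons_succ, Fin.append_right]

/-- Main subform criterion: for anisotropic quasilinear forms, containment of value sets
implies being a subform. -/
theorem sub_of_dset (h2K : (2 : K) = 0) :
    ∀ {n : ℕ} (σ : Fin n → K) {m : ℕ} (τ : Fin m → K), Anis K σ → Anis K τ →
      Dset K σ ⊆ Dset K τ → Subform K σ τ := by
  intro n
  induction n with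
  | zero => exact fun σ {m} τ _ _ _ => ⟨m, τ, append_empty_isom σ τ⟩
  | succ n IH =>
    intro σ m τ hσ hτ hsub
    set c : K := σ 0 with hcdef
    have hc : c ≠ 0 := by
      intro h0
      have h1 : qf K σ (Pi.single 0 (1:K)) = 0 := by rw [qf_single, ← hcdef]; exact h0
      have := hσ _ h1
      have h2 := congrFun this 0
      simp at h2
    have hcD : c ∈ Dset K τ := hsub (by rw [hcdef, ← qf_single (K := K) σ 0]; exact qf_mem_dset _ _)
    match m, τ, hτ, hsub, hcD with
    | 0, τ, hτ, hsub, hcD =>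
      exfalso
      obtain ⟨v, hv⟩ := hcD
      rw [show qf K τ v = 0 by simp [qf]] at hv
      exact hc hv.symm
    | (m' + 1), τ, hτ, hsub, hcD =>
      obtain ⟨ρ, hτρ⟩ := rep_cons h2K τ c hc hcD
      have hanis_cons : Anis K (Fin.cons c ρ) := anis_isom (isom_symm hτρ) hτ
      have hanis_ρ : Anis K ρ := anis_cons_tail hanis_cons
      have hdec : ∀ i : Fin n, ∃ mu wi, wi ∈ Dset K ρ ∧ σ i.succ = c * mu ^ 2 + wi := by
        intro i
        have : σ i.succ ∈ Dset K (Fin.cons c ρ) := by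
          rw [← dset_isom hτρ]
          exact hsub (by rw [← qf_single (K := K) σ i.succ]; exact qf_mem_dset _ _)
        obtain ⟨v, hv⟩ := this
        exact ⟨v 0, qf K ρ (Fin.tail v), qf_mem_dset _ _, by rw [← hv, qf_cons]⟩
      choose μ w hw hdecomp using hdec
      have hanis_w : Anis K w := by
        intro v hv
        have hbig : qf K σ (Fin.cons (∑ i, μ i * v i) v) = 0 := by
          rw [qf_split]
          have h1 : (Fin.cons (∑ i, μ i * v i) v : Fin (n+1) → K) 0 = ∑ i, μ i * v i :=
            Fin.cons_zero _ _
          have h2 : (fun i : Fin n => (Fin.cons (∑ i, μ i * v i) v : Fin (n+1) → K) i.succ)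
              = v := by
            funext i; exact Fin.cons_succ _ _ i
          rw [h1, h2, ← hcdef]
          have hqσ : qf K (fun i => σ i.succ) v
              = ∑ i, (c * μ i ^ 2 + w i) * v i ^ 2 := by
            simp only [qf]
            exact Finset.sum_congr rfl fun i _ => by rw [hdecomp i]
          have hsq : (∑ i, μ i * v i) ^ 2 = ∑ i, μ i ^ 2 * v i ^ 2 := by
            rw [sum_sq' h2K]
            exact Finset.sum_congr rfl fun i _ => by rw [mul_pow]
          have hqw : qf K w v = 0 := hv
          simp only [qf] at hqw
          -- goal : c * (∑ i, μ i * v i)^2 + qf (σ∘succ) v = 0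
          rw [hqσ, hsq, Finset.mul_sum]
          have : ∑ i, (c * μ i ^ 2 + w i) * v i ^ 2
              = ∑ i, (c * (μ i ^ 2 * v i ^ 2) + w i * v i ^ 2) := by
            exact Finset.sum_congr rfl fun i _ => by ring
          rw [this, Finset.sum_add_distrib, ← Finset.sum_add_distrib]
          have hterm : ∀ i : Fin n, c * (μ i ^ 2 * v i ^ 2) + c * (μ i ^ 2 * v i ^ 2) = 0 :=
            fun i => add_self' h2K _
          calc ∑ i, c * (μ i ^ 2 * v i ^ 2)
                + (∑ i, (c * (μ i ^ 2 * v i ^ 2) + w i * v i ^ 2))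
              = ∑ i, (c * (μ i ^ 2 * v i ^ 2) + (c * (μ i ^ 2 * v i ^ 2) + w i * v i ^ 2)) := by
                rw [← Finset.sum_add_distrib]
            _ = ∑ i, w i * v i ^ 2 := by
                refine Finset.sum_congr rfl fun i _ => ?_
                linear_combination add_self' h2K (c * (μ i ^ 2 * v i ^ 2))
            _ = 0 := hqw
        have := hσ _ hbig
        funext i
        have h3 := congrFun this i.succ
        simpa using h3
      have hsub_w : Dset K w ⊆ Dset K ρ := by
        rintro z ⟨v, rfl⟩
        have : qf K w v = ∑ i, (v i) ^ 2 * w i := by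
          simp only [qf]; exact Finset.sum_congr rfl fun i _ => by ring
        rw [this]
        exact dset_sum h2K ρ _ _ fun i _ => dset_sq_smul ρ (v i) (hw i)
      obtain ⟨k, s, hisoIH⟩ := IH w ρ hanis_w hanis_ρ hsub_w
      -- assemble
      have h1 : Isom K τ (Fin.cons c (Fin.append w s)) :=
        isom_trans hτρ (isom_cons_congr h2K c hisoIH)
      have h2 : Isom K (Fin.cons c (Fin.append w s))
          (Fin.cons c (Fin.append (fun i => c * μ i ^ 2 + w i) s)) :=
        shear2_isom h2K c μ w s
      have htail : (fun i => c * μ i ^ 2 + w i) = Fin.tail σ := by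
        funext i
        have := hdecomp i
        rw [← this]
        rfl
      rw [htail] at h2
      have h3 : Isom K (Fin.append σ s) (Fin.cons c (Fin.append (Fin.tail σ) s)) := by
        rw [append_cons_reindex σ s, hcdef]
        exact isom_comp _ (finCongr (by omega))
      exact ⟨k, s, isom_trans (isom_trans h1 h2) (isom_symm h3)⟩

end SubCriterion

section Extraction
variable {K : Type} [Field K]

theorem exists_nonroot [Infinite K] (d : ℕ) :
    ∃ v0 : K, v0 ≠ 0 ∧ ∀ m : ℕ, 1 ≤ m → m ≤ d → v0 ^ m ≠ 1 := by
  classical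
  have hfin : (({0} : Set K) ∪ ⋃ m ∈ Finset.Icc 1 d, {x : K | x ^ m = 1}).Finite := by
    refine Set.Finite.union (Set.finite_singleton 0) ?_
    refine Set.Finite.biUnion (Finset.Icc 1 d).finite_toSet (fun m hm => ?_)
    have hm1 : 1 ≤ m := (Finset.mem_Icc.mp hm).1
    have hne : (Polynomial.X ^ m - Polynomial.C 1 : Polynomial K) ≠ 0 := by
      intro h
      have h1 := congrArg (Polynomial.coeff · m) h
      have hm0 : m ≠ 0 := by omega
      simp [Polynomial.coeff_X_pow, Polynomial.coeff_one, hm0, sub_eq_zero] at h1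
    have := Polynomial.finite_setOf_isRoot hne
    refine this.subset fun x hx => ?_
    simp only [Set.mem_setOf_eq, Polynomial.IsRoot, Polynomial.eval_sub,
      Polynomial.eval_pow, Polynomial.eval_X, Polynomial.eval_C]
    rw [Set.mem_setOf_eq] at hx
    rw [hx]; ring
  obtain ⟨v0, hv0⟩ := Set.Infinite.nonempty (Set.Finite.infinite_compl hfin)
  simp only [Set.mem_compl_iff, Set.mem_union, Set.mem_singleton_iff, Set.mem_iUnion,
    not_or, not_exists] at hv0
  refine ⟨v0, hv0.1, fun m h1 h2 hpow => ?_⟩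
  have := hv0.2
  simp only [Set.mem_setOf_eq, not_exists, Finset.mem_Icc] at this
  exact this m ⟨h1, h2⟩ hpow

/-- Key extraction lemma: if a "polynomial in μ²" takes all its values in an additively
closed, square-multiple closed set W, then all its coefficients lie in W. -/
theorem mem_sum_W (W : Set K) (h0 : (0:K) ∈ W) (hadd : ∀ a ∈ W, ∀ b ∈ W, a + b ∈ W)
    {ι : Type*} (s : Finset ι) (f : ι → K) (hf : ∀ i ∈ s, f i ∈ W) :
    (∑ i ∈ s, f i) ∈ W := by
  classical
  induction s using Finset.induction_on with
  | empty => simpa using h0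
  | insert a s hx ih =>
    rw [Finset.sum_insert hx]
    exact hadd _ (hf a (Finset.mem_insert_self a s)) _
      (ih fun i hi => hf i (Finset.mem_insert_of_mem hi))

theorem coeff_mem_of_values (h2K : (2 : K) = 0) [Infinite K]
    (W : Set K) (h0W : (0:K) ∈ W) (hadd : ∀ a ∈ W, ∀ b ∈ W, a + b ∈ W)
    (hsq : ∀ (c : K), ∀ a ∈ W, c ^ 2 * a ∈ W) :
    ∀ (d : ℕ) (γ : ℕ → K),
      (∀ μ : K, (∑ k ∈ Finset.range (d + 1), γ k * μ ^ (2 * k)) ∈ W) →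
      ∀ k ≤ d, γ k ∈ W := by
  intro d
  induction d with
  | zero =>
    intro γ hval k hk
    interval_cases k
    have := hval 1
    simpa using this
  | succ d IH =>
    intro γ hval k hk
    obtain ⟨v0, hv00, hv0⟩ := exists_nonroot (K := K) (d + 1)
    set γ' : ℕ → K := fun k => γ k * (v0 ^ (d + 1) + v0 ^ k) ^ 2 with hγ'
    have hval' : ∀ μ : K, (∑ k ∈ Finset.range (d + 1), γ' k * μ ^ (2 * k)) ∈ W := by
      intro μ
      have hterm : ∀ k : ℕ, γ' k * μ ^ (2 * k)
          = (v0 ^ (d+1)) ^ 2 * (γ k * μ ^ (2 * k)) + γ k * (v0 * μ) ^ (2 * k) := by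
        intro k
        have hv2k : (v0:K) ^ (2 * k) = (v0 ^ k) ^ 2 := by
          rw [← pow_mul, Nat.mul_comm]
        rw [hγ']
        simp only []
        rw [add_sq' h2K, mul_pow, hv2k]
        ring
      have hkey : (∑ k ∈ Finset.range (d + 1), γ' k * μ ^ (2 * k))
          = (v0 ^ (d+1)) ^ 2 * (∑ k ∈ Finset.range (d + 2), γ k * μ ^ (2 * k))
            + (∑ k ∈ Finset.range (d + 2), γ k * (v0 * μ) ^ (2 * k)) := by
        have hlast : (v0 ^ (d+1)) ^ 2 * (γ (d+1) * μ ^ (2 * (d+1)))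
            + γ (d+1) * (v0 * μ) ^ (2 * (d+1)) = 0 := by
          have hv2k : (v0:K) ^ (2 * (d+1)) = (v0 ^ (d+1)) ^ 2 := by
            rw [← pow_mul, Nat.mul_comm]
          have h1 : γ (d+1) * (v0 * μ) ^ (2 * (d+1))
              = (v0 ^ (d+1)) ^ 2 * (γ (d+1) * μ ^ (2 * (d+1))) := by
            rw [mul_pow, hv2k]; ring
          rw [h1]
          exact add_self' h2K _
        calc (∑ k ∈ Finset.range (d + 1), γ' k * μ ^ (2 * k))
            = ∑ k ∈ Finset.range (d + 1),
                ((v0 ^ (d+1)) ^ 2 * (γ k * μ ^ (2 * k)) + γ k * (v0 * μ) ^ (2 * k)) :=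
              Finset.sum_congr rfl fun k _ => hterm k
          _ = (∑ k ∈ Finset.range (d + 1), (v0 ^ (d+1)) ^ 2 * (γ k * μ ^ (2 * k)))
              + (∑ k ∈ Finset.range (d + 1), γ k * (v0 * μ) ^ (2 * k)) :=
              Finset.sum_add_distrib
          _ = (v0 ^ (d+1)) ^ 2 * (∑ k ∈ Finset.range (d + 2), γ k * μ ^ (2 * k))
              + (∑ k ∈ Finset.range (d + 2), γ k * (v0 * μ) ^ (2 * k)) := by
              have hsplit1 : (∑ k ∈ Finset.range (d + 2), γ k * μ ^ (2 * k))
                  = (∑ k ∈ Finset.range (d + 1), γ k * μ ^ (2 * k))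
                    + γ (d+1) * μ ^ (2*(d+1)) := Finset.sum_range_succ _ _
              have hsplit2 : (∑ k ∈ Finset.range (d + 2), γ k * (v0 * μ) ^ (2 * k))
                  = (∑ k ∈ Finset.range (d + 1), γ k * (v0 * μ) ^ (2 * k))
                    + γ (d+1) * (v0 * μ) ^ (2*(d+1)) := Finset.sum_range_succ _ _
              rw [hsplit1, hsplit2, mul_add, Finset.mul_sum]
              linear_combination -hlast
      rw [hkey]
      exact hadd _ (hsq _ _ (hval μ)) _ (hval (v0 * μ))
    have hγ'W : ∀ k ≤ d, γ' k ∈ W := IH γ' hval'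
    have hγW : ∀ k ≤ d, γ k ∈ W := by
      intro k hkd
      have hne : v0 ^ (d + 1) + v0 ^ k ≠ 0 := by
        intro h0
        have heq : v0 ^ (d + 1) = v0 ^ k := eq_of_add_eq_zero' h2K _ _ h0
        have hlt : k < d + 1 := Nat.lt_succ_of_le hkd
        have : v0 ^ (d + 1 - k) = 1 := by
          have hk' : v0 ^ k ≠ 0 := pow_ne_zero _ hv00
          have hmm : v0 ^ (d + 1 - k) * v0 ^ k = 1 * v0 ^ k := by
            rw [← pow_add, Nat.sub_add_cancel (le_of_lt hlt), heq, one_mul]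
          exact mul_right_cancel₀ hk' hmm
        exact hv0 (d + 1 - k) (by omega) (by omega) this
      have := hγ'W k hkd
      rw [hγ'] at this
      have h2 := hsq ((v0 ^ (d + 1) + v0 ^ k)⁻¹) _ this
      have heq : ((v0 ^ (d + 1) + v0 ^ k)⁻¹) ^ 2
          * (γ k * (v0 ^ (d + 1) + v0 ^ k) ^ 2) = γ k := by
        field_simp
      rwa [heq] at h2
    rcases Nat.lt_or_ge k (d + 1) with hlt | hge
    · exact hγW k (by omega)
    · have hk1 : k = d + 1 := by omega
      subst hk1
      have hS := hval 1
      have hsum : (∑ k ∈ Finset.range (d + 2), γ k * (1:K) ^ (2 * k))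
          = (∑ k ∈ Finset.range (d + 1), γ k) + γ (d + 1) := by
        rw [Finset.sum_range_succ]
        simp
      rw [hsum] at hS
      have hrest : (∑ k ∈ Finset.range (d + 1), γ k) ∈ W := by
        refine mem_sum_W W h0W hadd _ _ fun k hk => ?_
        exact hγW k (Nat.lt_succ_iff.mp (Finset.mem_range.mp hk))
      have hfin : ((∑ k ∈ Finset.range (d + 1), γ k) + γ (d + 1))
          + (∑ k ∈ Finset.range (d + 1), γ k) = γ (d + 1) := by
        linear_combination add_self' h2K (∑ k ∈ Finset.range (d + 1), γ k)
      rw [← hfin]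
      exact hadd _ hS _ hrest

end Extraction

section FunFieldPrep
open MvPolynomial
variable {F : Type} [Field F]

theorem coeff_ne_zero {K : Type} [Field K] {n : ℕ} {d : Fin n → K} (hd : Anis K d)
    (i : Fin n) : d i ≠ 0 := by
  intro h0
  have h1 : qf K d (Pi.single i (1:K)) = 0 := by rw [qf_single]; exact h0
  have h2 := congrFun (hd _ h1) i
  simp at h2

theorem infinite_of_anis (h2 : (2:F) = 0) {n : ℕ} (p : Fin (n+2) → F) (hp : Anis F p) :
    Infinite F := by
  by_contra hfin
  rw [not_infinite_iff_finite] at hfin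
  have hinj : Function.Injective (fun x : F => x * x) := by
    intro a b hab
    simp only at hab
    have h1 : (a + b) * (a + b) = 0 := by
      have := add_sq' h2 a b
      rw [pow_two, pow_two, pow_two] at this
      rw [this, hab]
      exact add_self' h2 _
    have h2' : a + b = 0 := by
      rcases mul_eq_zero.mp h1 with h | h <;> exact h
    exact eq_of_add_eq_zero' h2 a b h2'
  have hsurj : Function.Surjective (fun x : F => x * x) :=
    Finite.injective_iff_surjective.mp hinj
  obtain ⟨lam, hlam⟩ := hsurj (p 1 / p 0)
  have hp0 : p 0 ≠ 0 := coeff_ne_zero hp 0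
  set w1 : Fin (n+1) → F := Fin.cons (1:F) (fun _ : Fin n => (0:F)) with hw1
  set v : Fin (n+2) → F := Fin.cons lam w1 with hv
  have h1 : (1 : Fin (n+2)) = Fin.succ 0 := by
    ext
    simp
  have hv1 : v 1 = 1 := by
    rw [hv, h1, Fin.cons_succ, hw1, Fin.cons_zero]
  have hqv : qf F p v = 0 := by
    rw [qf_split]
    have h0 : v 0 = lam := by rw [hv]; exact Fin.cons_zero _ _
    have htail : (fun i : Fin (n+1) => v i.succ) = w1 := by
      funext i; rw [hv]; exact Fin.cons_succ _ _ i
    rw [h0, htail, qf_split]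
    have htail2 : (fun i : Fin n => w1 i.succ) = (fun _ : Fin n => (0:F)) := by
      funext i; rw [hw1]; exact Fin.cons_succ _ _ i
    rw [htail2]
    rw [hw1]
    have hq0 : qf F (fun i : Fin n => p i.succ.succ) (fun _ => 0) = 0 := by simp [qf]
    rw [hq0, Fin.cons_zero]
    have hlam2 : p 0 * lam ^ 2 = p 1 := by
      have hlam' : lam * lam = p 1 / p 0 := hlam
      rw [pow_two, hlam']; field_simp
    have hps : p (0 : Fin (n+1)).succ = p 1 := rfl
    rw [hps, hlam2]
    simpa using add_self' h2 (p 1)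
  have hcon := congrFun (hp v hqv) 1
  rw [hv1] at hcon
  simp at hcon

/-- anisotropy over the polynomial ring, via evaluation at all points of an infinite field -/
theorem anis_poly (hF : Infinite F) {nq m : ℕ} {q : Fin nq → F} (hq : Anis F q)
    (f : Fin nq → MvPolynomial (Fin m) F)
    (hzero : (∑ j, MvPolynomial.C (q j) * f j ^ 2) = 0) : ∀ j, f j = 0 := by
  intro j
  have hev : ∀ a : Fin m → F, eval a (f j) = eval a (0 : MvPolynomial (Fin m) F) := by
    intro a
    have h1 : qf F q (fun j => eval a (f j)) = 0 := by
      have := congrArg (eval a) hzero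
      simpa [qf, map_sum] using this
    have := congrFun (hq _ h1) j
    simpa using this
  exact MvPolynomial.funext hev

end FunFieldPrep

section Inj
open MvPolynomial
variable {F : Type} [Field F] {K : Type} [Field K] [Algebra F K]

theorem finSuccEquiv_rename_succ {m : ℕ} (h : MvPolynomial (Fin m) F) :
    finSuccEquiv F m (rename Fin.succ h) = Polynomial.C h := by
  induction h using MvPolynomial.induction_on with
  | C a =>
    rw [rename_C]
    simp [MvPolynomial.finSuccEquiv_apply]
  | add p q hp hq => rw [map_add, map_add, hp, hq, map_add]
  | mul_X p i hp =>
    rw [map_mul, rename_X, map_mul, hp, finSuccEquiv_X_succ, ← Polynomial.C_mul]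

theorem aeval_succ_injective {np : ℕ} (p : Fin (np+2) → F)
    (hp0 : p ((0:Fin (np+1)).castSucc) ≠ 0) (x : Fin (np+1) → K)
    (hker : RingHom.ker (MvPolynomial.aeval x : MvPolynomial (Fin (np+1)) F →ₐ[F] K)
      = Ideal.span {chartD F p})
    (h : MvPolynomial (Fin np) F) (hh : MvPolynomial.aeval (fun i => x i.succ) h = 0) :
    h = 0 := by
  classical
  by_contra hne
  have hren : MvPolynomial.aeval x (rename Fin.succ h) = 0 := by
    rw [aeval_rename]
    exact hh
  have hmem : rename Fin.succ h ∈
      RingHom.ker (MvPolynomial.aeval x : MvPolynomial (Fin (np+1)) F →ₐ[F] K) := by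
    rw [RingHom.mem_ker]; exact hren
  rw [hker, Ideal.mem_span_singleton] at hmem
  obtain ⟨g, hg⟩ := hmem
  set φ := finSuccEquiv F np with hφdef
  set Θ : MvPolynomial (Fin np) F :=
    (∑ i : Fin np, C (p (i.succ.castSucc)) * X i ^ 2) + C (p (Fin.last (np+1))) with hΘ
  have hφC : ∀ a : F, φ (C a) = Polynomial.C (C a) := by
    intro a
    rw [← rename_C (Fin.succ : Fin np → Fin (np+1)) a]
    exact finSuccEquiv_rename_succ _
  have hsplit : chartD F p = C (p ((0:Fin (np+1)).castSucc)) * X 0 ^ 2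
      + rename Fin.succ Θ := by
    rw [hΘ]
    simp only [chartD, map_add, map_sum, map_mul, map_pow, rename_C, rename_X]
    rw [Fin.sum_univ_succ]
    ring
  have hφP : φ (chartD F p) = Polynomial.C (C (p ((0:Fin (np+1)).castSucc))) * Polynomial.X ^ 2
      + Polynomial.C Θ := by
    rw [hsplit, map_add, map_mul, map_pow, finSuccEquiv_X_zero, finSuccEquiv_rename_succ, hφC]
  have hC0 : (C (p ((0:Fin (np+1)).castSucc)) : MvPolynomial (Fin np) F) ≠ 0 := by
    intro h0
    exact hp0 (by simpa using h0)
  have hdeg : (Polynomial.C (C (p ((0:Fin (np+1)).castSucc))) * Polynomial.X ^ 2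
      + Polynomial.C Θ).natDegree = 2 := by
    rw [Polynomial.natDegree_add_C, Polynomial.natDegree_C_mul_X_pow 2 _ hC0]
  have hCh := congrArg φ hg
  rw [finSuccEquiv_rename_succ, map_mul] at hCh
  have hφP0 : φ (chartD F p) ≠ 0 := by
    rw [hφP]
    intro h0
    have := congrArg Polynomial.natDegree h0
    rw [hdeg] at this
    simp at this
  have hφg0 : φ g ≠ 0 := by
    intro h0
    rw [h0, mul_zero] at hCh
    exact hne (by simpa using hCh)
  have hdegs := congrArg Polynomial.natDegree hCh
  rw [Polynomial.natDegree_C, Polynomial.natDegree_mul hφP0 hφg0, hφP, hdeg] at hdegs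
  omega

end Inj

section ShiftEval
open MvPolynomial
variable {F : Type} [Field F] {K : Type} [Field K] [Algebra F K]

theorem eval_aeval_shift {np : ℕ} (x' : Fin np → K) (i0 : Fin np)
    (g : MvPolynomial (Fin np) F) (τ : K) :
    Polynomial.eval τ (MvPolynomial.aeval
        (fun i => Polynomial.C (x' i) + if i = i0 then Polynomial.X else 0) g)
      = MvPolynomial.aeval (fun i => x' i + if i = i0 then τ else 0) g := by
  induction g using MvPolynomial.induction_on with
  | C a =>
    rw [aeval_C, aeval_C, Polynomial.algebraMap_apply, Polynomial.eval_C]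
  | add f g hf hg => rw [map_add, Polynomial.eval_add, hf, hg, map_add]
  | mul_X f i hf =>
    rw [map_mul, aeval_X, Polynomial.eval_mul, hf, map_mul, aeval_X]
    congr 1
    by_cases hi : i = i0 <;> simp [hi]

end ShiftEval

section KeyScalar
open MvPolynomial
variable {F : Type} [Field F] {K : Type} [Field K] [Algebra F K]

theorem key_scalar (h2 : (2 : F) = 0) {np nq : ℕ}
    (p : Fin (np + 2) → F) (q : Fin (nq + 2) → F) (hp : Anis F p) (hq : Anis F q)
    (hK : IsFunFld F p K) (hiso : ¬ Anis K (bc F K q)) :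
    ∃ a : K, a ≠ 0 ∧ ∀ i : Fin (np + 2), a * bc F K p i ∈ Dset K (bc F K q) := by
  classical
  obtain ⟨x, hker, hfrac⟩ := hK
  have hFinf : Infinite F := infinite_of_anis h2 p hp
  have h2K : (2:K) = 0 := by
    have hh := map_ofNat (algebraMap F K) 2
    rw [← hh, h2, map_zero]
  haveI : Infinite K := Infinite.of_injective _ (algebraMap F K).injective
  set x' : Fin np → K := fun i => x i.succ with hx'
  have hINJ : ∀ h : MvPolynomial (Fin np) F, MvPolynomial.aeval x' h = 0 → h = 0 :=
    fun h hh => aeval_succ_injective p (coeff_ne_zero hp _) x hker h hh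
  set ct : Fin (np+1) → F := fun i => p i.castSucc with hct
  set c0 : F := p (Fin.last (np+1)) with hc0
  set cb : Fin (np+1) → K := fun i => algebraMap F K (ct i) with hcb
  set c0b : K := algebraMap F K c0 with hc0b
  have hchart : ∀ y : Fin (np+1) → K, MvPolynomial.aeval y (chartD F p)
      = ∑ i : Fin (np+1), cb i * (y i)^2 + c0b := by
    intro y
    simp only [chartD, map_add, map_sum, map_mul, map_pow, aeval_C, aeval_X, hct, hc0, hcb, hc0b]
  have hPx : MvPolynomial.aeval x (chartD F p) = 0 := by
    have hmem : chartD F p ∈ Ideal.span {chartD F p} := Ideal.subset_span rfl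
    rw [← hker] at hmem
    exact RingHom.mem_ker.mp hmem
  have hsum0 : ∑ i : Fin (np+1), cb i * (x i)^2 + c0b = 0 := by
    rw [← hchart x]; exact hPx
  have hθ : cb 0 * (x 0)^2 = ∑ i : Fin np, cb i.succ * (x' i)^2 + c0b := by
    rw [Fin.sum_univ_succ, add_assoc] at hsum0
    exact eq_of_add_eq_zero' h2K _ _ hsum0
  have hcb0 : cb 0 ≠ 0 := by
    rw [hcb]
    simp only [ne_eq, map_eq_zero]
    exact coeff_ne_zero hp _
  -- E-membership predicate
  set inE : K → Prop := fun z => ∃ A B : MvPolynomial (Fin np) F,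
    MvPolynomial.aeval x' B ≠ 0 ∧ z * MvPolynomial.aeval x' B = MvPolynomial.aeval x' A
    with hinE
  have hE1 : ∀ c : F, inE (algebraMap F K c) :=
    fun c => ⟨MvPolynomial.C c, 1, by simp, by simp⟩
  have hE0 : inE 0 := ⟨0, 1, by simp, by simp⟩
  have hEx' : ∀ i, inE (x' i) := fun i => ⟨MvPolynomial.X i, 1, by simp, by simp⟩
  have hEadd : ∀ {a b}, inE a → inE b → inE (a + b) := by
    rintro a b ⟨A1, B1, hB1, hA1⟩ ⟨A2, B2, hB2, hA2⟩
    refine ⟨A1 * B2 + A2 * B1, B1 * B2, by rw [map_mul]; exact mul_ne_zero hB1 hB2, ?_⟩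
    rw [map_add, map_mul, map_mul, map_mul]
    calc (a + b) * (MvPolynomial.aeval x' B1 * MvPolynomial.aeval x' B2)
        = (a * MvPolynomial.aeval x' B1) * MvPolynomial.aeval x' B2
          + (b * MvPolynomial.aeval x' B2) * MvPolynomial.aeval x' B1 := by ring
      _ = MvPolynomial.aeval x' A1 * MvPolynomial.aeval x' B2
          + MvPolynomial.aeval x' A2 * MvPolynomial.aeval x' B1 := by rw [hA1, hA2]
  have hEmul : ∀ {a b}, inE a → inE b → inE (a * b) := by
    rintro a b ⟨A1, B1, hB1, hA1⟩ ⟨A2, B2, hB2, hA2⟩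
    refine ⟨A1 * A2, B1 * B2, by rw [map_mul]; exact mul_ne_zero hB1 hB2, ?_⟩
    rw [map_mul, map_mul]
    calc a * b * (MvPolynomial.aeval x' B1 * MvPolynomial.aeval x' B2)
        = (a * MvPolynomial.aeval x' B1) * (b * MvPolynomial.aeval x' B2) := by ring
      _ = _ := by rw [hA1, hA2]
  have hEinv : ∀ {a}, a ≠ 0 → inE a → inE a⁻¹ := by
    rintro a ha ⟨A, B, hB, hA⟩
    have hAne : MvPolynomial.aeval x' A ≠ 0 := by
      rw [← hA]; exact mul_ne_zero ha hB
    refine ⟨B, A, hAne, ?_⟩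
    field_simp
    linear_combination -hA
  -- θ is in E
  have hEθ : inE (x 0 * x 0) := by
    refine ⟨(∑ i : Fin np, MvPolynomial.C (ct i.succ) * MvPolynomial.X i ^ 2)
      + MvPolynomial.C c0, MvPolynomial.C (ct 0), by simpa using coeff_ne_zero hp _, ?_⟩
    have : MvPolynomial.aeval x' ((∑ i : Fin np, MvPolynomial.C (ct i.succ) * MvPolynomial.X i ^ 2)
        + MvPolynomial.C c0) = ∑ i : Fin np, cb i.succ * (x' i)^2 + c0b := by
      simp only [map_add, map_sum, map_mul, map_pow, aeval_C, aeval_X, hcb, hc0b]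
    rw [this, ← hθ, aeval_C]
    rw [hcb]
    ring
  -- decomposition of K
  have hRmul : ∀ {r1 s1 r2 s2 : K}, inE r1 → inE s1 → inE r2 → inE s2 →
      ∃ r s, inE r ∧ inE s ∧ (r1 + s1 * x 0) * (r2 + s2 * x 0) = r + s * x 0 := by
    intro r1 s1 r2 s2 h1 h2' h3 h4
    refine ⟨r1*r2 + s1*s2*(x 0 * x 0), r1*s2 + s1*r2,
      hEadd (hEmul h1 h3) (hEmul (hEmul h2' h4) hEθ),
      hEadd (hEmul h1 h4) (hEmul h2' h3), by ring⟩
  have hEone : inE 1 := by simpa using hE1 1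
  have hRpoly : ∀ A : MvPolynomial (Fin (np+1)) F,
      ∃ r s, inE r ∧ inE s ∧ MvPolynomial.aeval x A = r + s * x 0 := by
    intro A
    induction A using MvPolynomial.induction_on with
    | C a => exact ⟨algebraMap F K a, 0, hE1 a, hE0, by simp [aeval_C]⟩
    | add f g hf hg =>
      obtain ⟨r1,s1,h1,h2',h3⟩ := hf; obtain ⟨r2,s2,h4,h5,h6⟩ := hg
      exact ⟨r1+r2, s1+s2, hEadd h1 h4, hEadd h2' h5, by rw [map_add, h3, h6]; ring⟩
    | mul_X f i hf =>
      obtain ⟨r1,s1,h1,h2',h3⟩ := hf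
      have hxi : ∃ r s, inE r ∧ inE s ∧ x i = r + s * x 0 := by
        refine Fin.cases ?_ (fun j => ?_) i
        · exact ⟨0, 1, hE0, hEone, by ring⟩
        · exact ⟨x' j, 0, hEx' j, hE0, by rw [hx']; ring⟩
      obtain ⟨r2,s2,h4,h5,h6⟩ := hxi
      obtain ⟨r,s,hr,hs,heq⟩ := hRmul h1 h2' h4 h5
      exact ⟨r, s, hr, hs, by rw [map_mul, aeval_X, h3, h6, heq]⟩
  have hRinv : ∀ {r s : K}, inE r → inE s → r + s * x 0 ≠ 0 →
      ∃ r' s', inE r' ∧ inE s' ∧ (r + s * x 0)⁻¹ = r' + s' * x 0 := by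
    intro r s hr hs hne
    set z := r + s * x 0 with hzdef
    have hzsq : z * z = r*r + s*s*(x 0 * x 0) := by
      have hh : z*z = r*r + s*s*(x 0*x 0) + 2*(r*(s*x 0)) := by rw [hzdef]; ring
      rw [hh, h2K]; ring
    have hnE : inE (z * z) := by
      rw [hzsq]; exact hEadd (hEmul hr hr) (hEmul (hEmul hs hs) hEθ)
    have hzz : z * z ≠ 0 := mul_ne_zero hne hne
    have hinv : inE (z*z)⁻¹ := hEinv hzz hnE
    refine ⟨r * (z*z)⁻¹, s * (z*z)⁻¹, hEmul hr hinv, hEmul hs hinv, ?_⟩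
    have hfe : (r + s*x 0) * (z*z)⁻¹ = z⁻¹ := by
      rw [← hzdef]
      field_simp
    calc z⁻¹ = (r + s*x 0)*(z*z)⁻¹ := hfe.symm
      _ = r*(z*z)⁻¹ + s*(z*z)⁻¹*x 0 := by ring
  have hR : ∀ z : K, ∃ r s : K, inE r ∧ inE s ∧ z = r + s * x 0 := by
    intro z
    obtain ⟨A, B, hB, hAB⟩ := hfrac z
    obtain ⟨rA,sA,h1,h2',h3⟩ := hRpoly A
    obtain ⟨rB,sB,h4,h5,h6⟩ := hRpoly B
    have hBne : rB + sB * x 0 ≠ 0 := by rw [← h6]; exact hB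
    obtain ⟨ri,si,h7,h8,h9⟩ := hRinv h4 h5 hBne
    have hz : z = (rA + sA*x 0) * (ri + si*x 0) := by
      have h10 : z = MvPolynomial.aeval x A / MvPolynomial.aeval x B :=
        eq_div_of_mul_eq hB hAB
      rw [div_eq_mul_inv, h3, h6, h9] at h10
      exact h10
    obtain ⟨r,s,hr,hs,heq⟩ := hRmul h1 h2' h7 h8
    exact ⟨r, s, hr, hs, by rw [hz, heq]⟩
  -- common denominators
  have hcommon : ∀ (g : Fin (nq+2) → K), (∀ j, inE (g j)) →
      ∃ D : MvPolynomial (Fin np) F, MvPolynomial.aeval x' D ≠ 0 ∧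
        ∀ j, ∃ G : MvPolynomial (Fin np) F, g j * MvPolynomial.aeval x' D = MvPolynomial.aeval x' G := by
    intro g hg
    choose A B hB hAB using hg
    refine ⟨∏ j, B j, by rw [map_prod]; exact Finset.prod_ne_zero_iff.mpr fun j _ => hB j,
      fun j => ⟨A j * ∏ k ∈ Finset.univ.erase j, B k, ?_⟩⟩
    have hsplit : (∏ k, B k) = B j * ∏ k ∈ Finset.univ.erase j, B k :=
      (Finset.mul_prod_erase Finset.univ B (Finset.mem_univ j)).symm
    rw [hsplit, map_mul, map_mul, ← mul_assoc, hAB j]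
  have hcbap : ∀ i, algebraMap F K (ct i) = cb i := fun i => rfl
  have hc0bap : algebraMap F K c0 = c0b := rfl
  set qb : Fin (nq+2) → K := bc F K q with hqb
  have hqbap : ∀ j, algebraMap F K (q j) = qb j := fun j => rfl
  -- isotropy vector over K
  have hisov : ∃ v : Fin (nq+2) → K, qf K (bc F K q) v = 0 ∧ v ≠ 0 := by
    by_contra hno
    apply hiso
    intro v hv
    by_contra hvne
    exact hno ⟨v, hv, hvne⟩
  obtain ⟨v, hqv, hvne⟩ := hisov
  choose r s hrE hsE hdecv using fun j => hR (v j)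
  obtain ⟨Dr, hDr, hDrj⟩ := hcommon r hrE
  obtain ⟨Ds, hDs, hDsj⟩ := hcommon s hsE
  set D : MvPolynomial (Fin np) F := Dr * Ds with hD
  have hDne : MvPolynomial.aeval x' D ≠ 0 := by
    rw [hD, map_mul]; exact mul_ne_zero hDr hDs
  have hRj : ∀ j, ∃ Rp : MvPolynomial (Fin np) F,
      r j * MvPolynomial.aeval x' D = MvPolynomial.aeval x' Rp := by
    intro j
    obtain ⟨Rp, hRp⟩ := hDrj j
    refine ⟨Rp * Ds, ?_⟩
    rw [hD, map_mul, ← mul_assoc, hRp, map_mul]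
  have hSj : ∀ j, ∃ Sp : MvPolynomial (Fin np) F,
      s j * MvPolynomial.aeval x' D = MvPolynomial.aeval x' Sp := by
    intro j
    obtain ⟨Sp, hSp⟩ := hDsj j
    refine ⟨Sp * Dr, ?_⟩
    rw [hD, map_mul, map_mul]
    calc s j * (MvPolynomial.aeval x' Dr * MvPolynomial.aeval x' Ds)
        = (s j * MvPolynomial.aeval x' Ds) * MvPolynomial.aeval x' Dr := by ring
      _ = MvPolynomial.aeval x' Sp * MvPolynomial.aeval x' Dr := by rw [hSp]
  choose R hRdef using hRj
  choose S hSdef using hSj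
  set QR : MvPolynomial (Fin np) F := ∑ j, MvPolynomial.C (q j) * R j ^ 2 with hQR
  set QS : MvPolynomial (Fin np) F := ∑ j, MvPolynomial.C (q j) * S j ^ 2 with hQS
  set Abar : K := ∑ j, qb j * (r j)^2 with hAbar
  set Bbar : K := ∑ j, qb j * (s j)^2 with hBbar
  have hQRx : MvPolynomial.aeval x' QR = Abar * (MvPolynomial.aeval x' D)^2 := by
    rw [hQR, map_sum, hAbar, Finset.sum_mul]
    refine Finset.sum_congr rfl fun j _ => ?_
    rw [map_mul, map_pow, aeval_C, ← hRdef j, mul_pow, hqbap j]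
    ring
  have hQSx : MvPolynomial.aeval x' QS = Bbar * (MvPolynomial.aeval x' D)^2 := by
    rw [hQS, map_sum, hBbar, Finset.sum_mul]
    refine Finset.sum_congr rfl fun j _ => ?_
    rw [map_mul, map_pow, aeval_C, ← hSdef j, mul_pow, hqbap j]
    ring
  have hiso2 : Abar + (x 0 * x 0) * Bbar = 0 := by
    rw [← hqv]
    rw [hAbar, hBbar, Finset.mul_sum, ← Finset.sum_add_distrib]
    refine Finset.sum_congr rfl fun j _ => ?_
    rw [hdecv j, add_sq' h2K, mul_pow]
    ring
  have hAeq : Abar = (x 0 * x 0) * Bbar := eq_of_add_eq_zero' h2K _ _ hiso2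
  have hBbar0 : Bbar ≠ 0 := by
    intro hB0
    have hQS0 : MvPolynomial.aeval x' QS = 0 := by rw [hQSx, hB0, zero_mul]
    have hSzero : ∀ j, S j = 0 := anis_poly hFinf hq S (by rw [← hQS]; exact hINJ _ hQS0)
    have hszero : ∀ j, s j = 0 := by
      intro j
      have hh := hSdef j
      rw [hSzero j, map_zero] at hh
      exact (mul_eq_zero.mp hh).resolve_right hDne
    have hA0 : Abar = 0 := by rw [hAeq, hB0, mul_zero]
    have hQR0 : MvPolynomial.aeval x' QR = 0 := by rw [hQRx, hA0, zero_mul]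
    have hRzero : ∀ j, R j = 0 := anis_poly hFinf hq R (by rw [← hQR]; exact hINJ _ hQR0)
    have hrzero : ∀ j, r j = 0 := by
      intro j
      have hh := hRdef j
      rw [hRzero j, map_zero] at hh
      exact (mul_eq_zero.mp hh).resolve_right hDne
    apply hvne
    funext j
    rw [hdecv j, hrzero j, hszero j]
    simp
  set Θp : MvPolynomial (Fin np) F :=
    (∑ i : Fin np, MvPolynomial.C (ct i.succ) * MvPolynomial.X i ^ 2) + MvPolynomial.C c0
    with hΘp
  have hΘx : MvPolynomial.aeval x' Θp = cb 0 * (x 0)^2 := by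
    rw [hΘp]
    simp only [map_add, map_sum, map_mul, map_pow, aeval_C, aeval_X]
    simp only [hcbap, hc0bap]
    rw [← hθ]
  have hIDE : MvPolynomial.C (ct 0) * QR = Θp * QS := by
    have hdiff : MvPolynomial.aeval x' (MvPolynomial.C (ct 0) * QR - Θp * QS) = 0 := by
      rw [map_sub, map_mul, map_mul, aeval_C, hQRx, hQSx, hΘx, hcbap 0, hAeq]
      ring
    exact sub_eq_zero.mp (hINJ _ hdiff)
  set fj : Fin (nq+2) → MvPolynomial (Fin (np+1)) F :=
    fun j => rename Fin.succ (R j) + rename Fin.succ (S j) * MvPolynomial.X 0 with hfj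
  set Phi : MvPolynomial (Fin (np+1)) F := ∑ j, MvPolynomial.C (q j) * fj j ^ 2 with hPhi
  have h2MvP : (2 : MvPolynomial (Fin (np+1)) F) = 0 := by
    have hh := map_ofNat (MvPolynomial.C : F →+* MvPolynomial (Fin (np+1)) F) 2
    rw [← hh, h2, map_zero]
  have hPhisplit : Phi = rename Fin.succ QR
      + MvPolynomial.X 0 ^ 2 * rename Fin.succ QS := by
    rw [hPhi, hQR, hQS, map_sum, map_sum, Finset.mul_sum, ← Finset.sum_add_distrib]
    refine Finset.sum_congr rfl fun j _ => ?_
    rw [map_mul, map_pow, map_mul, map_pow, rename_C, hfj]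
    simp only []
    rw [add_sq' h2MvP, mul_pow]
    ring
  have hPfact : MvPolynomial.C (ct 0) * Phi = rename Fin.succ QS * chartD F p := by
    have hchsplit : chartD F p = MvPolynomial.C (ct 0) * MvPolynomial.X 0 ^ 2
        + rename Fin.succ Θp := by
      rw [hΘp]
      simp only [chartD, map_add, map_sum, map_mul, map_pow, rename_C, rename_X]
      rw [Fin.sum_univ_succ, hct]
      ring
    rw [hchsplit, hPhisplit, mul_add]
    have h1 : MvPolynomial.C (ct 0) * rename Fin.succ QR
        = rename Fin.succ Θp * rename Fin.succ QS := by
      rw [← rename_C (Fin.succ : Fin np → Fin (np+1)) (ct 0), ← map_mul, hIDE, map_mul]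
    rw [h1]
    ring
  set V : Set K := Dset K (bc F K q) with hV
  have hmain : ∀ y : Fin (np+1) → K,
      MvPolynomial.aeval (fun i => y i.succ) QS * MvPolynomial.aeval y (chartD F p)
        = cb 0 * qf K (bc F K q) (fun j => MvPolynomial.aeval y (fj j)) := by
    intro y
    have h1 := congrArg (MvPolynomial.aeval y) hPfact
    rw [map_mul, map_mul, aeval_C, aeval_rename] at h1
    try simp only [Function.comp, Function.comp_def] at h1
    have h2' : MvPolynomial.aeval y Phi
        = qf K (bc F K q) (fun j => MvPolynomial.aeval y (fj j)) := by
      rw [hPhi, map_sum, qf]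
      refine Finset.sum_congr rfl fun j _ => ?_
      rw [map_mul, map_pow, aeval_C]
      rfl
    rw [h2', hcbap 0] at h1
    exact h1.symm
  have hklem : ∑ i : Fin np, cb i.succ * (x' i)^2 + c0b = cb 0 * (x 0)^2 := hθ.symm
  set a0 : K := MvPolynomial.aeval x' QS with ha0def
  have ha0V : ∀ lam : K, a0 * lam^2 ∈ V := by
    intro lam
    have hy := hmain (Fin.cons (x 0 + lam) x')
    have hys : (fun i : Fin np => (Fin.cons (x 0 + lam) x' : Fin (np+1) → K) i.succ) = x' := by
      funext i; exact Fin.cons_succ _ _ i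
    rw [hys] at hy
    have hchartval : MvPolynomial.aeval (Fin.cons (x 0 + lam) x') (chartD F p)
        = cb 0 * lam^2 := by
      rw [hchart]
      rw [Fin.sum_univ_succ]
      have hc00 : (Fin.cons (x 0 + lam) x' : Fin (np+1) → K) 0 = x 0 + lam :=
        Fin.cons_zero _ _
      have hcss : ∀ i : Fin np, (Fin.cons (x 0 + lam) x' : Fin (np+1) → K) i.succ = x' i :=
        fun i => Fin.cons_succ _ _ i
      rw [hc00, Finset.sum_congr rfl (fun i _ => by rw [hcss i]), add_assoc, hklem,
        add_sq' h2K]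
      linear_combination add_self' h2K (cb 0 * (x 0)^2)
    rw [hchartval] at hy
    have hy' : cb 0 * (a0 * lam^2)
        = cb 0 * qf K (bc F K q) (fun j => MvPolynomial.aeval (Fin.cons (x 0 + lam) x') (fj j)) := by
      rw [ha0def]
      linear_combination hy
    have hcan := mul_left_cancel₀ hcb0 hy'
    rw [hV, hcan]
    exact qf_mem_dset _ _
  have ha0ne : a0 ≠ 0 := by
    rw [hQSx]
    exact mul_ne_zero hBbar0 (pow_ne_zero _ hDne)
  set W : Set K := {z : K | ∃ w ∈ V, z = cb 0 * w} with hW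
  have hW0 : (0:K) ∈ W := ⟨0, dset_zero _, by ring⟩
  have hWadd : ∀ a ∈ W, ∀ b ∈ W, a + b ∈ W := by
    rintro a ⟨w1, hw1, rfl⟩ b ⟨w2, hw2, rfl⟩
    exact ⟨w1 + w2, dset_add h2K _ hw1 hw2, by ring⟩
  have hWsq : ∀ (c : K), ∀ a ∈ W, c^2 * a ∈ W := by
    rintro c a ⟨w, hw, rfl⟩
    exact ⟨c^2 * w, dset_sq_smul _ c hw, by ring⟩
  have hctsA : ∀ i0 : Fin np, ∃ w ∈ V, cb i0.succ * a0 = cb 0 * w := by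
    intro i0
    set Psi : Polynomial K := MvPolynomial.aeval
      (fun i => Polynomial.C (x' i) + if i = i0 then Polynomial.X else 0) QS with hPsi
    have hPsieval : ∀ τ : K, Polynomial.eval τ Psi
        = MvPolynomial.aeval (fun i => x' i + if i = i0 then τ else 0) QS := by
      intro τ
      rw [hPsi]
      exact eval_aeval_shift x' i0 QS τ
    have hy2chart : ∀ τ : K,
        MvPolynomial.aeval (Fin.cons (x 0) (fun i => x' i + if i = i0 then τ else 0))
          (chartD F p) = cb i0.succ * τ^2 := by
      intro τ
      rw [hchart, Fin.sum_univ_succ]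
      have hc00 : (Fin.cons (x 0) (fun i => x' i + if i = i0 then τ else 0)
          : Fin (np+1) → K) 0 = x 0 := Fin.cons_zero _ _
      have hcss : ∀ i : Fin np, (Fin.cons (x 0) (fun i => x' i + if i = i0 then τ else 0)
          : Fin (np+1) → K) i.succ = x' i + if i = i0 then τ else 0 :=
        fun i => Fin.cons_succ _ _ i
      rw [hc00, Finset.sum_congr rfl (fun i _ => by rw [hcss i])]
      have hsum2 : ∑ i : Fin np, cb i.succ * ((x' i + if i = i0 then τ else 0))^2
          = (∑ i : Fin np, cb i.succ * (x' i)^2) + cb i0.succ * τ^2 := by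
        have hstep : ∀ i : Fin np, cb i.succ * ((x' i + if i = i0 then τ else 0))^2
            = cb i.succ * (x' i)^2 + (if i = i0 then cb i.succ * τ^2 else 0) := by
          intro i
          by_cases hi : i = i0 <;> simp [hi, add_sq' h2K] <;> ring
        rw [Finset.sum_congr rfl (fun i _ => hstep i), Finset.sum_add_distrib]
        congr 1
        rw [Finset.sum_ite_eq' Finset.univ i0 (fun i => cb i.succ * τ^2)]
        simp
      rw [hsum2]
      linear_combination hklem + add_self' h2K (cb 0 * (x 0)^2)
    have hval2 : ∀ τ : K, Polynomial.eval τ Psi * (cb i0.succ * τ^2) ∈ W := by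
      intro τ
      have hy := hmain (Fin.cons (x 0) (fun i => x' i + if i = i0 then τ else 0))
      have hys : (fun i : Fin np =>
          (Fin.cons (x 0) (fun i => x' i + if i = i0 then τ else 0) : Fin (np+1) → K) i.succ)
          = (fun i => x' i + if i = i0 then τ else 0) := by
        funext i; exact Fin.cons_succ _ _ i
      rw [hys, hy2chart τ] at hy
      refine ⟨qf K (bc F K q) (fun j => MvPolynomial.aeval
          (Fin.cons (x 0) (fun i => x' i + if i = i0 then τ else 0)) (fj j)),
        qf_mem_dset _ _, ?_⟩
      rw [hPsieval τ]
      exact hy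
    set dP : ℕ := Psi.natDegree with hdP
    set γ : ℕ → K := fun k => if k < 2 then 0 else cb i0.succ * Psi.coeff (k - 2) with hγ
    have hγval : ∀ μ : K, (∑ k ∈ Finset.range (dP + 2 + 1), γ k * μ^(2*k)) ∈ W := by
      intro μ
      have hval := hval2 (μ^2)
      have hevalsum : Polynomial.eval (μ^2) Psi
          = ∑ k ∈ Finset.range (dP + 1), Psi.coeff k * (μ^2)^k := by
        rw [Polynomial.eval_eq_sum_range]
      have hsum : (∑ k ∈ Finset.range (dP + 2 + 1), γ k * μ^(2*k))
          = Polynomial.eval (μ^2) Psi * (cb i0.succ * (μ^2)^2) := by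
        rw [hevalsum, Finset.sum_mul]
        rw [Finset.sum_range_succ' _ (dP + 2), Finset.sum_range_succ' _ (dP + 1)]
        have hγ0 : γ 0 = 0 := by rw [hγ]; norm_num
        have hγ1 : γ 1 = 0 := by rw [hγ]; norm_num
        have hγk2 : ∀ k, γ (k + 1 + 1) = cb i0.succ * Psi.coeff k := by
          intro k
          have hnlt : ¬ (k + 1 + 1 < 2) := by omega
          have hsub : k + 1 + 1 - 2 = k := by omega
          rw [hγ]
          simp only [hnlt, if_false, hsub]
        rw [hγ0, hγ1]
        rw [Finset.sum_congr rfl (fun k _ => by rw [hγk2 k])]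
        have hterm : ∀ k, (cb i0.succ * Psi.coeff k) * μ ^ (2 * (k + 1 + 1))
            = Psi.coeff k * (μ^2)^k * (cb i0.succ * (μ^2)^2) := by
          intro k
          rw [pow_mul]
          rw [pow_add (μ^2) k 2]
          ring
        rw [Finset.sum_congr rfl (fun k _ => hterm k)]
        ring
      rw [hsum]
      exact hval
    have hcoeff := coeff_mem_of_values h2K W hW0 hWadd hWsq (dP + 2) γ hγval 2 (by omega)
    have hγ2 : γ 2 = cb i0.succ * Psi.coeff 0 := by rw [hγ]; norm_num
    have hc0eval : Psi.coeff 0 = a0 := by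
      have h00 := hPsieval (0:K)
      rw [Polynomial.coeff_zero_eq_eval_zero, h00]
      have hfn : (fun i => x' i + if i = i0 then (0:K) else 0) = x' := by
        funext i; simp
      try rw [hfn]
      try exact ha0def.symm
    rw [hγ2, hc0eval] at hcoeff
    exact hcoeff
  refine ⟨a0 * (cb 0)⁻¹, mul_ne_zero ha0ne (inv_ne_zero hcb0), ?_⟩
  have hallj : ∀ j : Fin (np+1), a0 * (cb 0)⁻¹ * cb j ∈ V := by
    intro j
    refine Fin.cases ?_ (fun i0 => ?_) j
    · have hh : a0 * (cb 0)⁻¹ * cb 0 = a0 * 1^2 := by field_simp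
      rw [hh]
      exact ha0V 1
    · obtain ⟨w, hwV, hww⟩ := hctsA i0
      have hh : a0 * (cb 0)⁻¹ * cb i0.succ = w := by
        field_simp
        linear_combination hww
      rw [hh]
      exact hwV
  intro i
  refine Fin.lastCases ?_ (fun j => ?_) i
  · have hc0s : c0b = ∑ j : Fin (np+1), cb j * (x j)^2 := by
      rw [add_comm] at hsum0
      exact eq_of_add_eq_zero' h2K _ _ hsum0
    have hbc : bc F K p (Fin.last (np+1)) = c0b := rfl
    rw [hbc, hc0s, Finset.mul_sum]
    refine dset_sum h2K _ _ _ fun j _ => ?_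
    have hh : a0 * (cb 0)⁻¹ * (cb j * (x j)^2) = (x j)^2 * (a0 * (cb 0)⁻¹ * cb j) := by ring
    rw [hh]
    exact dset_sq_smul _ _ (hallj j)
  · have hbc : bc F K p j.castSucc = cb j := rfl
    rw [hbc]
    exact hallj j

end KeyScalar

end QLinAux

open QLinAux


open QLin in
/-- Let `p` and `q` be anisotropic quasilinear quadratic forms of
dimension `≥ 2` over a field `F` of characteristic `2`. If `q_{F(p)}` is isotropic, then
`p₁ = (p_{F(p)})_an` is similar to a subform of `(q_{F(p)})_an`. -/
theorem statement11 (F : Type) [Field F] (h2 : (2 : F) = 0) {np nq : ℕ}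
    (p : Fin (np + 2) → F) (q : Fin (nq + 2) → F) (hp : Anis F p) (hq : Anis F q)
    (K : Type) [Field K] [Algebra F K] (hK : IsFunFld F p K)
    (hiso : ¬ Anis K (bc F K q)) :
    ∀ (m₁ : ℕ) (p₁ : Fin m₁ → K), IsAnisPart K p₁ (bc F K p) →
    ∀ (m₂ : ℕ) (qa : Fin m₂ → K), IsAnisPart K qa (bc F K q) →
      SimSubform K p₁ qa := by
  intro m₁ p₁ hp₁ m₂ qa hqa
  obtain ⟨hanis_p1, k1, hiso_p1⟩ := hp₁
  obtain ⟨hanis_qa, k2, hiso_qa⟩ := hqa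
  have h2K : (2:K) = 0 := by
    have hh := map_ofNat (algebraMap F K) 2
    rw [← hh, h2, map_zero]
  obtain ⟨a, ha, haV⟩ := key_scalar h2 p q hp hq hK hiso
  have hDp : Dset K (bc F K p) = Dset K p₁ :=
    (dset_isom hiso_p1).trans (dset_append_zero p₁)
  have hDq : Dset K (bc F K q) = Dset K qa :=
    (dset_isom hiso_qa).trans (dset_append_zero qa)
  have hqf_smul : ∀ (n : ℕ) (d : Fin n → K) (v : Fin n → K),
      qf K (fun i => a * d i) v = a * qf K d v := by
    intro n d v
    simp only [qf, Finset.mul_sum]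
    exact Finset.sum_congr rfl fun i _ => by ring
  have hσanis : Anis K (fun i => a * p₁ i) := by
    intro v hv
    apply hanis_p1
    rw [hqf_smul] at hv
    exact (mul_eq_zero.mp hv).resolve_left ha
  have hsub : Dset K (fun i => a * p₁ i) ⊆ Dset K qa := by
    rintro z ⟨v, rfl⟩
    rw [hqf_smul]
    have h1 : qf K p₁ v ∈ Dset K (bc F K p) := by
      rw [hDp]
      exact qf_mem_dset _ _
    obtain ⟨μ, hμ⟩ := h1
    rw [← hμ]
    have h3 : a * qf K (bc F K p) μ = ∑ i, (μ i)^2 * (a * bc F K p i) := by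
      simp only [qf, Finset.mul_sum]
      exact Finset.sum_congr rfl fun i _ => by ring
    rw [h3, ← hDq]
    exact dset_sum h2K _ _ _ fun i _ => dset_sq_smul _ _ (haV i)
  exact ⟨a, ha, sub_of_dset h2K (fun i => a * p₁ i) qa hσanis hanis_qa hsub⟩
end

section
/- Let p and q be anisotropic quasilinear quadratic forms of dimension ≥ 2 over a field F of characteristic 2. If q_{F(p)} is isotropic, then i₀(q_{F(p)}) ≤ dim(q) − dim(p) + i₁(p). -/
open scoped BigOperators

namespace S12


lemma sum_antidiagonal_sq {A : Type*} [AddCommMonoid A] [DecidableEq A]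
    [Finset.HasAntidiagonal A] {R : Type*} [CommRing R] (h2 : (2:R) = 0)
    (g : A → R) (β : A) (hcan : ∀ u : A, u + u = β + β → u = β) :
    ∑ uv ∈ Finset.HasAntidiagonal.antidiagonal (β + β), g uv.1 * g uv.2 = g β ^ 2 := by
  classical
  have hmem : (β, β) ∈ Finset.HasAntidiagonal.antidiagonal (β + β) := by
    rw [Finset.HasAntidiagonal.mem_antidiagonal]
  rw [← Finset.add_sum_erase _ _ hmem]
  have hz : ∑ uv ∈ (Finset.HasAntidiagonal.antidiagonal (β+β)).erase (β, β), g uv.1 * g uv.2 = 0 := by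
    apply Finset.sum_involution (g := fun uv _ => (uv.2, uv.1))
    · intro a _
      have : g a.1 * g a.2 + g a.2 * g a.1 = 2 * (g a.1 * g a.2) := by ring
      rw [this, h2, zero_mul]
    · intro a ha _
      intro hEq
      have h1 : a.2 = a.1 := congrArg Prod.fst hEq
      have hmem' := Finset.mem_of_mem_erase ha
      rw [Finset.HasAntidiagonal.mem_antidiagonal] at hmem'
      have : a.1 = β := hcan a.1 (by rw [← h1] at hmem' ⊢; exact hmem')
      exact (Finset.ne_of_mem_erase ha) (by rw [Prod.ext_iff]; exact ⟨this, h1.trans this⟩)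
    · intro a ha
      have hmem' := Finset.mem_of_mem_erase ha
      rw [Finset.HasAntidiagonal.mem_antidiagonal] at hmem'
      refine Finset.mem_erase.2 ⟨?_, ?_⟩
      · intro hEq
        have h1 : a.2 = β := congrArg Prod.fst hEq
        have h2' : a.1 = β := congrArg Prod.snd hEq
        exact (Finset.ne_of_mem_erase ha) (by rw [Prod.ext_iff]; exact ⟨h2', h1⟩)
      · rw [Finset.HasAntidiagonal.mem_antidiagonal, add_comm]; exact hmem'
    · intro a _; rfl
  rw [hz, add_zero, sq]

lemma sum_antidiagonal_nosq {A : Type*} [AddCommMonoid A] [DecidableEq A]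
    [Finset.HasAntidiagonal A] {R : Type*} [CommRing R] (h2 : (2:R) = 0)
    (g : A → R) (n : A) (hno : ∀ u : A, u + u ≠ n) :
    ∑ uv ∈ Finset.HasAntidiagonal.antidiagonal n, g uv.1 * g uv.2 = 0 := by
  classical
  apply Finset.sum_involution (g := fun uv _ => (uv.2, uv.1))
  · intro a _
    have : g a.1 * g a.2 + g a.2 * g a.1 = 2 * (g a.1 * g a.2) := by ring
    rw [this, h2, zero_mul]
  · intro a ha _
    intro hEq
    have h1 : a.2 = a.1 := congrArg Prod.fst hEq
    rw [Finset.HasAntidiagonal.mem_antidiagonal] at ha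
    exact hno a.1 (by rw [← h1] at ha ⊢; exact ha)
  · intro a ha
    rw [Finset.HasAntidiagonal.mem_antidiagonal] at ha ⊢
    rw [add_comm]; exact ha
  · intro a _; rfl

lemma poly_coeff_sq_even {R : Type*} [CommRing R] (h2 : (2:R) = 0)
    (f : Polynomial R) (c : ℕ) : (f^2).coeff (2*c) = f.coeff c ^ 2 := by
  rw [sq, Polynomial.coeff_mul]
  have h : 2*c = c + c := by ring
  rw [h]
  exact sum_antidiagonal_sq h2 _ c (fun u hu => by omega)

lemma poly_coeff_sq_odd {R : Type*} [CommRing R] (h2 : (2:R) = 0)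
    (f : Polynomial R) (c : ℕ) : (f^2).coeff (2*c+1) = 0 := by
  rw [sq, Polynomial.coeff_mul]
  exact sum_antidiagonal_nosq h2 _ _ (fun u => by omega)

lemma mv_coeff_sq {σ : Type*} [DecidableEq σ] {R : Type*} [CommRing R] (h2 : (2:R) = 0)
    (f : MvPolynomial σ R) (β : σ →₀ ℕ) :
    MvPolynomial.coeff (β + β) (f^2) = MvPolynomial.coeff β f ^ 2 := by
  rw [sq, MvPolynomial.coeff_mul]
  refine sum_antidiagonal_sq h2 _ β (fun u hu => ?_)
  ext a
  have := DFunLike.congr_fun hu a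
  simp only [Finsupp.add_apply] at this
  omega



def sqRH (R : Type*) [CommRing R] (h2 : (2:R) = 0) : R →+* R where
  toFun a := a ^ 2
  map_one' := one_pow 2
  map_mul' a b := mul_pow a b 2
  map_zero' := zero_pow (by norm_num)
  map_add' a b := by
    show (a + b)^2 = a^2 + b^2
    have h : (a + b)^2 = a^2 + b^2 + 2*(a*b) := by ring
    rw [h, h2, zero_mul, add_zero]

def Tw (K : Type) [Field K] (_h2 : (2:K) = 0) : Type := K

instance (K : Type) [Field K] (h2 : (2:K) = 0) : AddCommGroup (Tw K h2) :=
  inferInstanceAs (AddCommGroup K)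

noncomputable instance (K : Type) [Field K] (h2 : (2:K) = 0) : Module K (Tw K h2) :=
  Module.compHom K (sqRH K h2)

variable {K : Type} [Field K] (h2 : (2:K) = 0)

/-- view an element of K in Tw -/
def tw (h2 : (2:K) = 0) : K → Tw K h2 := id

/-- view an element of Tw in K -/
def untw (h2 : (2:K) = 0) : Tw K h2 → K := id

lemma tw_smul (a : K) (x : K) : a • (tw h2 x) = tw h2 (a^2 * x) := rfl

lemma tw_add (a b : K) : tw h2 (a + b) = tw h2 a + tw h2 b := rfl

lemma tw_zero : tw h2 0 = 0 := rfl

lemma tw_inj : Function.Injective (tw h2) := fun _ _ h => h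

lemma tw_sum {α : Type*} (s : Finset α) (f : α → K) :
    tw h2 (∑ i ∈ s, f i) = ∑ i ∈ s, tw h2 (f i) := rfl

/-- the quasilinear form as a linear map into the twisted module -/
noncomputable def qlin {k : ℕ} (d : Fin k → K) : (Fin k → K) →ₗ[K] Tw K h2 where
  toFun v := tw h2 (∑ i, d i * v i ^ 2)
  map_add' v w := by
    have key : (∑ i, d i * ((v+w) i)^2 : K)
        = (∑ i, d i * v i ^2) + (∑ i, d i * w i ^2) := by
      rw [← Finset.sum_add_distrib]
      refine Finset.sum_congr rfl (fun i _ => ?_)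
      have h : (v i + w i)^2 = v i ^2 + w i ^2 + 2*(v i * w i) := by ring
      simp only [Pi.add_apply]
      rw [h, h2]; ring
    show tw h2 (∑ i, d i * ((v+w) i)^2)
      = tw h2 ((∑ i, d i * v i ^2) + (∑ i, d i * w i ^2))
    rw [key]
  map_smul' a v := by
    simp only [RingHom.id_apply]
    rw [tw_smul]
    congr 1
    rw [Finset.mul_sum]
    refine Finset.sum_congr rfl (fun i _ => ?_)
    simp only [Pi.smul_apply, smul_eq_mul]
    ring

lemma qlin_apply {k : ℕ} (d : Fin k → K) (v : Fin k → K) :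
    qlin h2 d v = tw h2 (∑ i, d i * v i ^ 2) := rfl

lemma qlin_eq_qf {k : ℕ} (d : Fin k → K) (v : Fin k → K) :
    qlin h2 d v = tw h2 (QLin.qf K d v) := rfl

lemma i0_eq {k : ℕ} (d : Fin k → K) :
    QLin.i0 K d = Module.finrank K (LinearMap.ker (qlin h2 d)) := by
  apply IsGreatest.csSup_eq
  constructor
  · refine ⟨LinearMap.ker (qlin h2 d), fun v hv => ?_, rfl⟩
    have : qlin h2 d v = 0 := hv
    exact tw_inj h2 this
  · rintro j ⟨W, hW, rfl⟩
    have hle : W ≤ LinearMap.ker (qlin h2 d) := by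
      intro v hv
      refine LinearMap.mem_ker.2 ?_
      show tw h2 (QLin.qf K d v) = 0
      rw [hW v hv]; rfl
    exact Submodule.finrank_mono hle

lemma range_qlin {k : ℕ} (d : Fin k → K) :
    LinearMap.range (qlin h2 d) = Submodule.span K (Set.range (fun i => tw h2 (d i))) := by
  apply le_antisymm
  · rintro _ ⟨v, rfl⟩
    rw [qlin_apply, tw_sum]
    refine Submodule.sum_mem _ (fun i _ => ?_)
    have : tw h2 (d i * v i ^ 2) = (v i) • tw h2 (d i) := by
      rw [tw_smul]; congr 1; ring
    rw [this]
    exact Submodule.smul_mem _ _ (Submodule.subset_span ⟨i, rfl⟩)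
  · rw [Submodule.span_le]
    rintro _ ⟨i, rfl⟩
    refine ⟨Pi.single i 1, ?_⟩
    rw [qlin_apply]
    congr 1
    rw [Finset.sum_eq_single i]
    · simp
    · intro b _ hb; simp [Pi.single_eq_of_ne hb]
    · simp

lemma rank_nullity {k : ℕ} (d : Fin k → K) :
    Module.finrank K (Submodule.span K (Set.range (fun i => tw h2 (d i))))
      + QLin.i0 K d = k := by
  rw [i0_eq h2 d, ← range_qlin h2 d]
  rw [LinearMap.finrank_range_add_finrank_ker (qlin h2 d)]
  exact Module.finrank_fin_fun K





open MvPolynomial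

variable {F : Type} [Field F] [Algebra F K]

lemma char2K (h2 : (2:F) = 0) : (2:K) = 0 := by
  have h := map_ofNat (algebraMap F K) 2
  rw [← h, h2, map_zero]

set_option maxHeartbeats 2000000 in
theorem heart {n m : ℕ} (h2 : (2:F) = 0) (h2K : (2:K) = 0)
    (p : Fin (n+2) → F) (q : Fin m → F)
    (hp0 : p 0 ≠ 0)
    (hq : ∀ lam : Fin m → F, (∑ j, q j * lam j ^ 2) = 0 → lam = 0)
    (x : Fin (n+1) → K)
    (hker : RingHom.ker (MvPolynomial.aeval x : MvPolynomial (Fin (n+1)) F →ₐ[F] K)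
       = Ideal.span {QLin.chartD F p})
    (hgen : ∀ z : K, ∃ a b : MvPolynomial (Fin (n+1)) F,
       MvPolynomial.aeval x b ≠ 0 ∧ z * MvPolynomial.aeval x b = MvPolynomial.aeval x a)
    (v : Fin m → K) (hv : v ≠ 0)
    (hqv : (∑ j, algebraMap F K (q j) * v j ^ 2) = 0) :
    ∃ w : K, w ≠ 0 ∧ ∀ ι : Fin (n+2),
      tw h2K (algebraMap F K (p ι) * w) ∈
        Submodule.span K (Set.range (fun j => tw h2K (algebraMap F K (q j)))) := by
  classical
  set V : Submodule K (Tw K h2K) :=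
    Submodule.span K (Set.range (fun j => tw h2K (algebraMap F K (q j)))) with hV
  -- notation
  set y : K := x 0 with hy
  set x' : Fin n → K := fun i => x i.succ with hx'
  set P0 : K := algebraMap F K (p 0) with hP0def
  set Ptop : K := algebraMap F K (p (Fin.last (n+1))) with hPtopdef
  set PC : Fin n → K := fun i => algebraMap F K (p (i.succ.castSucc)) with hPCdef
  have hP0 : P0 ≠ 0 := fun h => hp0 ((map_eq_zero_iff _ (algebraMap F K).injective).1 h)
  -- the chart relation
  have hchart : MvPolynomial.aeval x (QLin.chartD F p) = 0 := by
    have hmem : QLin.chartD F p ∈ RingHom.ker (MvPolynomial.aeval x :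
        MvPolynomial (Fin (n+1)) F →ₐ[F] K) := by
      rw [hker]; exact Ideal.subset_span rfl
    exact hmem
  have hrel : (∑ i : Fin (n+1), algebraMap F K (p i.castSucc) * x i ^ 2) + Ptop = 0 := by
    have := hchart
    unfold QLin.chartD at this
    rw [map_add, map_sum] at this
    simp only [map_mul, map_pow, MvPolynomial.aeval_C, MvPolynomial.aeval_X] at this
    exact this
  have hrel2 : P0 * y^2 = (∑ i : Fin n, PC i * x' i ^ 2) + Ptop := by
    rw [Fin.sum_univ_succ] at hrel
    simp only [Fin.castSucc_zero] at hrel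
    linear_combination hrel - ((∑ i : Fin n, PC i * x' i ^ 2) + Ptop) * h2K
  -- polynomial witness from the isotropic vector
  choose aa bb hbb hab using hgen
  set B : MvPolynomial (Fin (n+1)) F := ∏ j : Fin m, bb (v j) with hB
  set a : Fin m → MvPolynomial (Fin (n+1)) F :=
    fun j => aa (v j) * ∏ j' ∈ Finset.univ.erase j, bb (v j') with ha'
  have hBne : (MvPolynomial.aeval x) B ≠ 0 := by
    rw [hB, map_prod]
    exact Finset.prod_ne_zero_iff.2 (fun j _ => hbb (v j))
  have ha : ∀ j, MvPolynomial.aeval x (a j) = v j * MvPolynomial.aeval x B := by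
    intro j
    rw [ha', hB]
    simp only
    rw [map_mul, ← hab (v j), map_prod, map_prod, mul_assoc]
    congr 1
    exact Finset.mul_prod_erase Finset.univ (fun j' => MvPolynomial.aeval x (bb (v j'))) (Finset.mem_univ j)
  have hsum : (∑ j, algebraMap F K (q j) * (MvPolynomial.aeval x (a j)) ^ 2) = 0 := by
    have : ∀ j ∈ Finset.univ, algebraMap F K (q j) * (MvPolynomial.aeval x (a j)) ^ 2
        = (algebraMap F K (q j) * v j ^ 2) * (MvPolynomial.aeval x B)^2 := by
      intro j _; rw [ha j]; ring
    rw [Finset.sum_congr rfl this, ← Finset.sum_mul, hqv, zero_mul]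
  obtain ⟨j0, hj0⟩ : ∃ j, v j ≠ 0 := by
    by_contra hcon
    push_neg at hcon
    exact hv (funext hcon)
  have haj0 : MvPolynomial.aeval x (a j0) ≠ 0 := by
    rw [ha j0]; exact mul_ne_zero hj0 hBne
  -- the polynomial-splitting world
  set Φ : MvPolynomial (Fin (n+1)) F ≃ₐ[F] Polynomial (MvPolynomial (Fin n) F) :=
    MvPolynomial.finSuccEquiv F n with hΦ
  set R : MvPolynomial (Fin n) F :=
    (∑ i : Fin n, MvPolynomial.C (p (i.succ.castSucc)) * (MvPolynomial.X i)^2) +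
      MvPolynomial.C (p (Fin.last (n+1))) with hR
  set ε : Polynomial (MvPolynomial (Fin n) F) →ₐ[F] K :=
    ((Polynomial.aeval y).restrictScalars F).comp
      (Polynomial.mapAlgHom (MvPolynomial.aeval x')) with hε
  have hεX : ε Polynomial.X = y := by
    rw [hε]; simp
  have hεC : ∀ g : MvPolynomial (Fin n) F, ε (Polynomial.C g) = MvPolynomial.aeval x' g := by
    have hcomp : (ε.comp (Polynomial.CAlgHom :
        MvPolynomial (Fin n) F →ₐ[F] Polynomial (MvPolynomial (Fin n) F)))
        = MvPolynomial.aeval x' := by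
      apply MvPolynomial.algHom_ext
      intro i
      rw [AlgHom.comp_apply]
      show ε (Polynomial.C (MvPolynomial.X i)) = _
      rw [hε]
      simp
    intro g
    exact DFunLike.congr_fun hcomp g
  have hεΦ : ∀ g, ε (Φ g) = MvPolynomial.aeval x g := by
    intro g
    have hcomp : (ε.comp (Φ : MvPolynomial (Fin (n+1)) F →ₐ[F] Polynomial (MvPolynomial (Fin n) F)))
        = MvPolynomial.aeval x := by
      apply MvPolynomial.algHom_ext
      intro i
      refine Fin.cases ?_ (fun j => ?_) i
      · have h1 : (Φ : MvPolynomial (Fin (n+1)) F →ₐ[F] Polynomial (MvPolynomial (Fin n) F))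
            (MvPolynomial.X 0) = Polynomial.X := by
          rw [hΦ]; exact MvPolynomial.finSuccEquiv_X_zero
        rw [AlgHom.comp_apply, h1, hεX]
        simp [hy]
      · have h1 : (Φ : MvPolynomial (Fin (n+1)) F →ₐ[F] Polynomial (MvPolynomial (Fin n) F))
            (MvPolynomial.X j.succ) = Polynomial.C (MvPolynomial.X j) := by
          rw [hΦ]; exact MvPolynomial.finSuccEquiv_X_succ
        rw [AlgHom.comp_apply, h1, hεC]
        simp [hx']
    exact DFunLike.congr_fun hcomp g
  have haR : MvPolynomial.aeval x' R = P0 * y^2 := by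
    rw [hR, map_add, map_sum]
    simp only [map_mul, map_pow, MvPolynomial.aeval_C, MvPolynomial.aeval_X]
    rw [hrel2]
  -- quadratic modulus
  set μ : Polynomial (MvPolynomial (Fin n) F) :=
    Polynomial.X^2 + Polynomial.C (MvPolynomial.C (p 0)⁻¹ * R) with hμdef
  have hμ : μ.Monic := by
    rw [hμdef]
    exact Polynomial.monic_X_pow_add (lt_of_le_of_lt (Polynomial.degree_C_le) (by norm_num))
  have hεμ : ε μ = 0 := by
    rw [hμdef, map_add, map_pow, hεX, hεC, map_mul, MvPolynomial.aeval_C, haR]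
    have hcan : (algebraMap F K) (p 0)⁻¹ * P0 = 1 := by
      rw [hP0def, ← map_mul, inv_mul_cancel₀ hp0, map_one]
    rw [← mul_assoc, hcan, one_mul]
    linear_combination (y^2) * h2K
  set e : Fin m → MvPolynomial (Fin n) F := fun j => ((Φ (a j)) %ₘ μ).coeff 0 with he'
  set f : Fin m → MvPolynomial (Fin n) F := fun j => ((Φ (a j)) %ₘ μ).coeff 1 with hf'
  have hmod : ∀ j, (Φ (a j)) %ₘ μ = Polynomial.C (e j) + Polynomial.C (f j) * Polynomial.X := by
    intro j
    have hlt : ((Φ (a j)) %ₘ μ).degree < μ.degree := Polynomial.degree_modByMonic_lt _ hμ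
    have hdegμ : μ.degree = 2 := by
      rw [hμdef]
      exact Polynomial.degree_X_pow_add_C (by norm_num) _
    rw [hdegμ] at hlt
    have hle : ((Φ (a j)) %ₘ μ).degree ≤ 1 := by
      by_cases h0 : (Φ (a j)) %ₘ μ = 0
      · rw [h0, Polynomial.degree_zero]; exact bot_le
      · have hnd : (((Φ (a j)) %ₘ μ).natDegree : WithBot ℕ) < 2 := by
          rw [← Polynomial.degree_eq_natDegree h0]; exact hlt
        have hnd' : ((Φ (a j)) %ₘ μ).natDegree ≤ 1 := by exact_mod_cast Nat.lt_succ_iff.mp (by exact_mod_cast hnd)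
        calc ((Φ (a j)) %ₘ μ).degree ≤ (((Φ (a j)) %ₘ μ).natDegree : WithBot ℕ) :=
              Polynomial.degree_le_natDegree
          _ ≤ 1 := by exact_mod_cast hnd'
    have := Polynomial.eq_X_add_C_of_degree_le_one hle
    rw [this, he', hf']
    ring
  have hεr : ∀ j, MvPolynomial.aeval x (a j)
      = MvPolynomial.aeval x' (e j) + MvPolynomial.aeval x' (f j) * y := by
    intro j
    have hdecomp : Φ (a j) = μ * ((Φ (a j)) /ₘ μ) + ((Φ (a j)) %ₘ μ) := by
      conv_lhs => rw [← Polynomial.modByMonic_add_div (Φ (a j)) μ]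
      ring
    rw [← hεΦ, hdecomp, map_add, map_mul, hεμ, zero_mul, zero_add, hmod j,
      map_add, map_mul, hεC, hεC, hεX]
  clear_value a e f
  -- Φ on constants
  have hΦC : ∀ c : F, Φ (MvPolynomial.C c) = Polynomial.C (MvPolynomial.C c) := by
    intro c
    have h1 : (MvPolynomial.C c : MvPolynomial (Fin (n+1)) F)
        = algebraMap F (MvPolynomial (Fin (n+1)) F) c := by
      rw [MvPolynomial.algebraMap_eq]
    rw [h1, AlgEquiv.commutes, Polynomial.algebraMap_apply, MvPolynomial.algebraMap_eq]
  -- Φ of the chart polynomial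
  have hΦP : Φ (QLin.chartD F p)
      = Polynomial.C (MvPolynomial.C (p 0)) * Polynomial.X^2 + Polynomial.C R := by
    unfold QLin.chartD
    rw [map_add, map_sum, Fin.sum_univ_succ]
    have h0 : Φ (MvPolynomial.C (p ((0:Fin (n+1)).castSucc)) * MvPolynomial.X 0 ^ 2)
        = Polynomial.C (MvPolynomial.C (p 0)) * Polynomial.X^2 := by
      rw [map_mul, map_pow, hΦ, MvPolynomial.finSuccEquiv_X_zero, ← hΦ, hΦC]
      simp [Fin.castSucc_zero]
    have hsucc : ∀ i : Fin n, Φ (MvPolynomial.C (p ((Fin.succ i).castSucc)) * MvPolynomial.X i.succ ^ 2)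
        = Polynomial.C (MvPolynomial.C (p (i.succ.castSucc)) * MvPolynomial.X i ^ 2) := by
      intro i
      rw [map_mul, map_pow, hΦ, MvPolynomial.finSuccEquiv_X_succ, ← hΦ, hΦC,
        ← Polynomial.C_pow, ← Polynomial.C_mul]
    rw [h0, Finset.sum_congr rfl (fun i _ => hsucc i), hΦC, ← map_sum Polynomial.C, hR, map_add]
    ring
  -- algebraic independence of x'
  have indep : ∀ Λ : MvPolynomial (Fin n) F, MvPolynomial.aeval x' Λ = 0 → Λ = 0 := by
    intro Λ hΛ
    have hren : MvPolynomial.aeval x (MvPolynomial.rename Fin.succ Λ) = 0 := by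
      rw [MvPolynomial.aeval_rename]
      exact hΛ
    have hmem : MvPolynomial.rename Fin.succ Λ ∈ RingHom.ker (MvPolynomial.aeval x :
        MvPolynomial (Fin (n+1)) F →ₐ[F] K) := hren
    rw [hker, Ideal.mem_span_singleton] at hmem
    obtain ⟨c, hc⟩ := hmem
    have hΦren : Φ (MvPolynomial.rename Fin.succ Λ) = Polynomial.C Λ := by
      have hcomp : ((Φ : MvPolynomial (Fin (n+1)) F →ₐ[F] Polynomial (MvPolynomial (Fin n) F)).comp
          (MvPolynomial.rename (Fin.succ) : MvPolynomial (Fin n) F →ₐ[F] MvPolynomial (Fin (n+1)) F))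
          = (Polynomial.CAlgHom : MvPolynomial (Fin n) F →ₐ[F] Polynomial (MvPolynomial (Fin n) F)) := by
        apply MvPolynomial.algHom_ext
        intro i
        rw [AlgHom.comp_apply]
        show Φ (MvPolynomial.rename Fin.succ (MvPolynomial.X i)) = Polynomial.C (MvPolynomial.X i)
        rw [MvPolynomial.rename_X, hΦ]
        exact MvPolynomial.finSuccEquiv_X_succ
      have := DFunLike.congr_fun hcomp Λ
      exact this
    by_cases hcz : c = 0
    · rw [hcz, mul_zero] at hc
      have : MvPolynomial.rename Fin.succ Λ = MvPolynomial.rename Fin.succ 0 := by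
        rw [hc, map_zero]
      exact MvPolynomial.rename_injective _ (Fin.succ_injective n) this
    · by_cases hΛ0 : Λ = 0
      · exact hΛ0
      exfalso
      have hCeq : Polynomial.C Λ = (Polynomial.C (MvPolynomial.C (p 0)) * Polynomial.X^2
          + Polynomial.C R) * Φ c := by
        rw [← hΦP, ← map_mul, ← hc, hΦren]
      have hdleft : (Polynomial.C Λ).degree = 0 := Polynomial.degree_C hΛ0
      have hd2 : (Polynomial.C (MvPolynomial.C (p 0)) * Polynomial.X^2
          + Polynomial.C R).degree = 2 := by
        have hCp0 : (MvPolynomial.C (p 0) : MvPolynomial (Fin n) F) ≠ 0 := by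
          simpa using hp0
        have h1 : (Polynomial.C (MvPolynomial.C (p 0)) * Polynomial.X^2 :
            Polynomial (MvPolynomial (Fin n) F)).degree = 2 := by
          rw [Polynomial.degree_C_mul_X_pow 2 hCp0]
          norm_cast
        rw [Polynomial.degree_add_eq_left_of_degree_lt]
        · exact h1
        · rw [h1]
          exact lt_of_le_of_lt (Polynomial.degree_C_le) (by norm_num)
      have hΦc : Φ c ≠ 0 := fun h => hcz (by
        have := congrArg Φ.symm h
        rwa [AlgEquiv.symm_apply_apply, map_zero] at this)
      have hdmul := Polynomial.degree_mul (p := Polynomial.C (MvPolynomial.C (p 0)) * Polynomial.X^2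
          + Polynomial.C R) (q := Φ c)
      rw [← hCeq, hdleft, hd2] at hdmul
      have hdc : (Φ c).degree = ((Φ c).natDegree : WithBot ℕ) := Polynomial.degree_eq_natDegree hΦc
      rw [hdc] at hdmul
      have : (0 : WithBot ℕ) = ((2 + (Φ c).natDegree : ℕ) : WithBot ℕ) := by
        rw [hdmul]
        push_cast
        rfl
      have h00 : (0:ℕ) = 2 + (Φ c).natDegree := by exact_mod_cast this
      omega
  -- the two half polynomials
  set E : MvPolynomial (Fin n) F := ∑ j, MvPolynomial.C (q j) * (e j)^2 with hE
  set W : MvPolynomial (Fin n) F := ∑ j, MvPolynomial.C (q j) * (f j)^2 with hW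
  have haE : MvPolynomial.aeval x' E = ∑ j, algebraMap F K (q j) * (MvPolynomial.aeval x' (e j))^2 := by
    rw [hE, map_sum]
    exact Finset.sum_congr rfl (fun j _ => by rw [map_mul, map_pow, MvPolynomial.aeval_C])
  have haW : MvPolynomial.aeval x' W = ∑ j, algebraMap F K (q j) * (MvPolynomial.aeval x' (f j))^2 := by
    rw [hW, map_sum]
    exact Finset.sum_congr rfl (fun j _ => by rw [map_mul, map_pow, MvPolynomial.aeval_C])
  have hEWval : MvPolynomial.aeval x' E + y^2 * MvPolynomial.aeval x' W = 0 := by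
    rw [haE, haW, Finset.mul_sum, ← Finset.sum_add_distrib, ← hsum]
    refine Finset.sum_congr rfl (fun j _ => ?_)
    rw [hεr j]
    have hsq : ((MvPolynomial.aeval x') (e j) + (MvPolynomial.aeval x') (f j) * y)^2
        = ((MvPolynomial.aeval x') (e j))^2 + ((MvPolynomial.aeval x') (f j))^2 * y^2 := by
      have hh : ((MvPolynomial.aeval x') (e j) + (MvPolynomial.aeval x') (f j) * y)^2
          = ((MvPolynomial.aeval x') (e j))^2 + ((MvPolynomial.aeval x') (f j))^2 * y^2
            + 2 * ((MvPolynomial.aeval x') (e j) * ((MvPolynomial.aeval x') (f j) * y)) := by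
        ring
      rw [hh, h2K, zero_mul, add_zero]
    rw [hsq]
    ring
  -- the polynomial identity  C(p 0) * E = R * W
  have hEWpoly : MvPolynomial.C (p 0) * E = R * W := by
    have h2M : (2 : MvPolynomial (Fin n) F) = 0 := by
      have := map_ofNat (MvPolynomial.C : F →+* MvPolynomial (Fin n) F) 2
      rw [← this, h2, map_zero]
    have hzero : MvPolynomial.aeval x' (MvPolynomial.C (p 0) * E + R * W) = 0 := by
      rw [map_add, map_mul, map_mul, MvPolynomial.aeval_C, haR]
      calc P0 * (MvPolynomial.aeval x') E + P0 * y ^ 2 * (MvPolynomial.aeval x') W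
          = P0 * ((MvPolynomial.aeval x') E + y^2 * (MvPolynomial.aeval x') W) := by ring
        _ = 0 := by rw [hEWval, mul_zero]
    have := indep _ hzero
    linear_combination this - (R * W) * h2M
  clear_value E W
  -- case W = 0 : contradiction
  by_cases hW0 : W = 0
  · exfalso
    have hE0 : E = 0 := by
      have : MvPolynomial.C (p 0) * E = 0 := by rw [hEWpoly, hW0, mul_zero]
      rcases mul_eq_zero.1 this with h | h
      · exact absurd (by simpa using h) hp0
      · exact h
    have hef : ∀ j, e j = 0 ∧ f j = 0 := by
      have key : ∀ (g : Fin m → MvPolynomial (Fin n) F),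
          (∑ j, MvPolynomial.C (q j) * (g j)^2) = 0 → ∀ j, g j = 0 := by
        intro g hg j
        apply MvPolynomial.ext
        intro β
        have hco := congrArg (MvPolynomial.coeff (β + β)) hg
        rw [MvPolynomial.coeff_sum, MvPolynomial.coeff_zero] at hco
        have hco2 : ∑ j', q j' * (MvPolynomial.coeff β (g j'))^2 = 0 := by
          rw [← hco]
          refine Finset.sum_congr rfl (fun j' _ => ?_)
          rw [MvPolynomial.coeff_C_mul, mv_coeff_sq h2]
        have := hq (fun j' => MvPolynomial.coeff β (g j')) hco2
        have := congrFun this j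
        simpa using this
      intro j
      exact ⟨key e (by rw [← hE, hE0]) j, key f (by rw [← hW, hW0]) j⟩
    have : MvPolynomial.aeval x (a j0) = 0 := by
      rw [hεr j0, (hef j0).1, (hef j0).2]
      simp
    exact haj0 this
  -- main branch : W ≠ 0
  have hWval : MvPolynomial.aeval x' W ≠ 0 := fun h => hW0 (indep W h)
  set w : K := MvPolynomial.aeval x' W * P0⁻¹ with hwdef
  have hw0 : w ≠ 0 := mul_ne_zero hWval (inv_ne_zero hP0)
  have memV : ∀ lam : Fin m → K, tw h2K (∑ j, algebraMap F K (q j) * lam j ^ 2) ∈ V := by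
    intro lam
    rw [tw_sum]
    refine Submodule.sum_mem _ (fun j _ => ?_)
    have heq : tw h2K (algebraMap F K (q j) * lam j ^2)
        = lam j • tw h2K (algebraMap F K (q j)) := by
      rw [tw_smul h2K]; congr 1; ring
    rw [heq]
    exact Submodule.smul_mem _ _ (Submodule.subset_span ⟨j, rfl⟩)
  have smulV : ∀ (z c : K), tw h2K c ∈ V → tw h2K (z^2 * c) ∈ V := by
    intro z c hc
    have := Submodule.smul_mem V z hc
    rwa [tw_smul h2K] at this
  -- per-variable polynomial picture
  set Ψ : Fin n → (MvPolynomial (Fin n) F →ₐ[F] Polynomial K) :=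
    fun κ => MvPolynomial.aeval (fun i => if i = κ then Polynomial.X else Polynomial.C (x' i))
    with hΨ
  have hΨC : ∀ (κ : Fin n) (c : F), Ψ κ (MvPolynomial.C c)
      = Polynomial.C (algebraMap F K c) := by
    intro κ c
    rw [hΨ]
    simp only [MvPolynomial.aeval_C]
    rw [Polynomial.algebraMap_apply]
  have hcoeff : ∀ (g : Fin m → MvPolynomial (Fin n) F) (κ : Fin n) (d : ℕ),
      (Ψ κ (∑ j, MvPolynomial.C (q j) * (g j)^2)).coeff d
        = ∑ j, algebraMap F K (q j) * ((Ψ κ (g j))^2).coeff d := by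
    intro g κ d
    rw [map_sum, Polynomial.finset_sum_coeff]
    refine Finset.sum_congr rfl (fun j _ => ?_)
    rw [map_mul, map_pow, hΨC, Polynomial.coeff_C_mul]
  have coeffmem : ∀ (g : Fin m → MvPolynomial (Fin n) F) (κ : Fin n) (d : ℕ),
      tw h2K ((Ψ κ (∑ j, MvPolynomial.C (q j) * (g j)^2)).coeff d) ∈ V := by
    intro g κ d
    rw [hcoeff]
    rcases Nat.even_or_odd d with hev | hod
    · obtain ⟨c, hc⟩ := hev
      have hd2 : d = 2*c := by omega
      subst hd2
      have : ∀ j ∈ Finset.univ, algebraMap F K (q j) * ((Ψ κ (g j))^2).coeff (2*c)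
          = algebraMap F K (q j) * ((Ψ κ (g j)).coeff c)^2 := by
        intro j _
        rw [poly_coeff_sq_even h2K]
      rw [Finset.sum_congr rfl this]
      exact memV _
    · obtain ⟨c, hc⟩ := hod
      subst hc
      have : ∀ j ∈ Finset.univ, algebraMap F K (q j) * ((Ψ κ (g j))^2).coeff (2*c+1)
          = 0 := by
        intro j _
        rw [poly_coeff_sq_odd h2K, mul_zero]
      rw [Finset.sum_congr rfl this, Finset.sum_const_zero, tw_zero h2K]
      exact Submodule.zero_mem V
  have coeffodd : ∀ (g : Fin m → MvPolynomial (Fin n) F) (κ : Fin n) (c : ℕ),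
      ((Ψ κ (∑ j, MvPolynomial.C (q j) * (g j)^2)).coeff (2*c+1)) = 0 := by
    intro g κ c
    rw [hcoeff]
    refine Finset.sum_eq_zero (fun j _ => ?_)
    rw [poly_coeff_sq_odd h2K, mul_zero]
  -- the constant part of Ψ κ R
  set ρ : Fin n → K := fun κ => (∑ i ∈ Finset.univ.erase κ, PC i * x' i ^ 2) + Ptop with hρdef
  have hΨR : ∀ κ, Ψ κ R = Polynomial.C (PC κ) * Polynomial.X^2 + Polynomial.C (ρ κ) := by
    intro κ
    rw [hR, map_add, map_sum, hΨC]
    have hterm : ∀ i : Fin n, Ψ κ (MvPolynomial.C (p i.succ.castSucc) * MvPolynomial.X i ^2)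
        = if i = κ then Polynomial.C (PC κ) * Polynomial.X^2
          else Polynomial.C (PC i * x' i ^ 2) := by
      intro i
      rw [map_mul, map_pow, hΨC]
      by_cases hiκ : i = κ
      · subst hiκ
        rw [if_pos rfl, hΨ]
        rw [MvPolynomial.aeval_X, if_pos rfl]
      · rw [if_neg hiκ, hΨ]
        rw [MvPolynomial.aeval_X, if_neg hiκ, ← Polynomial.C_pow, ← Polynomial.C_mul]
    rw [Finset.sum_congr rfl (fun i _ => hterm i)]
    rw [← Finset.add_sum_erase _ _ (Finset.mem_univ κ), if_pos rfl]
    have herase : ∑ i ∈ Finset.univ.erase κ,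
        (if i = κ then Polynomial.C (PC κ) * Polynomial.X^2
          else Polynomial.C (PC i * x' i ^ 2))
        = Polynomial.C (∑ i ∈ Finset.univ.erase κ, PC i * x' i ^ 2) := by
      rw [map_sum]
      refine Finset.sum_congr rfl (fun i hi => ?_)
      rw [if_neg (Finset.ne_of_mem_erase hi)]
    rw [herase, hρdef]
    simp only
    rw [Polynomial.C_add, hPtopdef]
    ring
  have hρ : ∀ κ, ρ κ = P0 * y^2 + PC κ * x' κ ^ 2 := by
    intro κ
    have hsplit : (∑ i : Fin n, PC i * x' i ^ 2)
        = PC κ * x' κ ^ 2 + ∑ i ∈ Finset.univ.erase κ, PC i * x' i ^ 2 :=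
      (Finset.add_sum_erase _ _ (Finset.mem_univ κ)).symm
    rw [hρdef]
    simp only
    linear_combination (-1 : K) * hrel2 - hsplit - (PC κ * x' κ ^ 2) * h2K
  have hkey : ∀ κ, Polynomial.C P0 * (Ψ κ E)
      = (Polynomial.C (PC κ) * Polynomial.X^2 + Polynomial.C (ρ κ)) * (Ψ κ W) := by
    intro κ
    have hh := congrArg (Ψ κ) hEWpoly
    rw [map_mul, map_mul, hΨC, hΨR] at hh
    rw [← hP0def] at hh
    exact hh
  have hrec : ∀ (κ : Fin n) (d : ℕ), P0 * (Ψ κ E).coeff (d+2)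
      = PC κ * (Ψ κ W).coeff d + ρ κ * (Ψ κ W).coeff (d+2) := by
    intro κ d
    have hh := congrArg (fun (g : Polynomial K) => g.coeff (d+2)) (hkey κ)
    rw [Polynomial.coeff_C_mul, add_mul, Polynomial.coeff_add, Polynomial.coeff_C_mul] at hh
    have hterm : (Polynomial.C (PC κ) * Polynomial.X^2 * (Ψ κ W)).coeff (d+2)
        = PC κ * (Ψ κ W).coeff d := by
      have hcomm : Polynomial.C (PC κ) * Polynomial.X^2 * (Ψ κ W)
          = Polynomial.C (PC κ) * ((Ψ κ W) * Polynomial.X^2) := by ring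
      rw [hcomm, Polynomial.coeff_C_mul, Polynomial.coeff_mul_X_pow]
    rw [hterm] at hh
    exact hh
  -- evaluation of Ψ κ W at x' κ
  have hWeval : ∀ κ, Polynomial.eval (x' κ) (Ψ κ W) = MvPolynomial.aeval x' W := by
    intro κ
    have hcomp : (((Polynomial.aeval (x' κ)).restrictScalars F).comp (Ψ κ))
        = MvPolynomial.aeval x' := by
      apply MvPolynomial.algHom_ext
      intro i
      rw [AlgHom.comp_apply, hΨ]
      by_cases hiκ : i = κ
      · subst hiκ
        simp
      · simp [hiκ]
    have hh := DFunLike.congr_fun hcomp W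
    simpa using hh
  clear_value Ψ ρ
  -- the cascade
  have casc : ∀ (κ : Fin n) (N d : ℕ), (Ψ κ W).natDegree + 1 ≤ d + 2*N →
      tw h2K (PC κ * (Ψ κ W).coeff d * P0⁻¹) ∈ V ∧
      tw h2K (ρ κ * (Ψ κ W).coeff d * P0⁻¹) ∈ V := by
    intro κ N
    induction N with
    | zero =>
      intro d hd
      have hc0 : (Ψ κ W).coeff d = 0 :=
        Polynomial.coeff_eq_zero_of_natDegree_lt (by omega)
      rw [hc0]
      constructor <;>
      · rw [mul_zero, zero_mul, tw_zero h2K]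
        exact Submodule.zero_mem V
    | succ N ih =>
      intro d hd
      by_cases hcase : (Ψ κ W).natDegree + 1 ≤ d + 2*N
      · exact ih d hcase
      · have ih2 := ih (d+2) (by omega)
        have h' : PC κ * (Ψ κ W).coeff d
            = P0 * (Ψ κ E).coeff (d+2) + ρ κ * (Ψ κ W).coeff (d+2) := by
          linear_combination (-1 : K) * (hrec κ d) - (ρ κ * (Ψ κ W).coeff (d+2)) * h2K
        have hkeyd : PC κ * (Ψ κ W).coeff d * P0⁻¹
            = (Ψ κ E).coeff (d+2) + ρ κ * (Ψ κ W).coeff (d+2) * P0⁻¹ := by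
          rw [h', add_mul]
          congr 1
          rw [mul_comm P0, mul_assoc, mul_inv_cancel₀ hP0, mul_one]
        have c1 : tw h2K (PC κ * (Ψ κ W).coeff d * P0⁻¹) ∈ V := by
          rw [hkeyd, tw_add h2K]
          refine Submodule.add_mem _ ?_ ih2.2
          have hmem := coeffmem e κ (d+2)
          rw [← hE] at hmem
          exact hmem
        refine ⟨c1, ?_⟩
        have hWdmem : tw h2K ((Ψ κ W).coeff d) ∈ V := by
          have hmem := coeffmem f κ d
          rw [← hW] at hmem
          exact hmem
        have hkey2 : ρ κ * (Ψ κ W).coeff d * P0⁻¹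
            = y^2 * ((Ψ κ W).coeff d) + (x' κ)^2 * (PC κ * (Ψ κ W).coeff d * P0⁻¹) := by
          rw [hρ κ]
          field_simp
        rw [hkey2, tw_add h2K]
        exact Submodule.add_mem _ (smulV y _ hWdmem) (smulV (x' κ) _ c1)
  have mainκ : ∀ κ : Fin n, tw h2K (PC κ * MvPolynomial.aeval x' W * P0⁻¹) ∈ V := by
    intro κ
    rw [← hWeval κ, Polynomial.eval_eq_sum_range]
    have hexp : PC κ * (∑ d ∈ Finset.range ((Ψ κ W).natDegree + 1),
        (Ψ κ W).coeff d * (x' κ)^d) * P0⁻¹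
        = ∑ d ∈ Finset.range ((Ψ κ W).natDegree + 1),
            (x' κ)^d * (PC κ * (Ψ κ W).coeff d * P0⁻¹) := by
      rw [Finset.mul_sum, Finset.sum_mul]
      exact Finset.sum_congr rfl (fun d _ => by ring)
    rw [hexp, tw_sum h2K]
    refine Submodule.sum_mem _ (fun d _ => ?_)
    rcases Nat.even_or_odd d with hev | hod
    · obtain ⟨c, hc⟩ := hev
      have hd2 : d = 2*c := by omega
      have hcasc := (casc κ ((Ψ κ W).natDegree + 1) d (by omega)).1
      have heq : (x' κ)^d * (PC κ * (Ψ κ W).coeff d * P0⁻¹)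
          = ((x' κ)^c)^2 * (PC κ * (Ψ κ W).coeff d * P0⁻¹) := by
        rw [hd2]; ring
      rw [heq]
      exact smulV _ _ hcasc
    · obtain ⟨c, hc⟩ := hod
      have hz : (Ψ κ W).coeff d = 0 := by
        rw [hc]
        have hmem := coeffodd f κ c
        rw [← hW] at hmem
        exact hmem
      rw [hz]
      have hzz : (x' κ)^d * (PC κ * 0 * P0⁻¹) = 0 := by ring
      rw [hzz, tw_zero h2K]
      exact Submodule.zero_mem V
  -- conclusion
  have hWmem : tw h2K (MvPolynomial.aeval x' W) ∈ V := by
    rw [haW]; exact memV _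
  have hP0w : P0 * w = MvPolynomial.aeval x' W := by
    rw [hwdef]
    field_simp
  refine ⟨w, hw0, ?_⟩
  intro ι
  refine Fin.lastCases ?_ (fun i => ?_) ι
  · -- Ptop slot
    have hPtop2 : Ptop = P0 * y^2 + ∑ i : Fin n, PC i * x' i ^2 := by
      linear_combination (-1 : K) * hrel2 - (∑ i : Fin n, PC i * x' i ^ 2) * h2K
    have hPtopW : Ptop * w = y^2 * (MvPolynomial.aeval x' W)
        + ∑ i : Fin n, (x' i)^2 * (PC i * MvPolynomial.aeval x' W * P0⁻¹) := by
      rw [hPtop2, add_mul, Finset.sum_mul]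
      have h1 : P0 * y^2 * w = y^2 * MvPolynomial.aeval x' W := by
        rw [mul_comm P0, mul_assoc, hP0w]
      rw [h1]
      congr 1
      refine Finset.sum_congr rfl (fun i _ => ?_)
      rw [hwdef]; ring
    rw [← hPtopdef, hPtopW, tw_add h2K, tw_sum h2K]
    refine Submodule.add_mem _ (smulV y _ hWmem)
      (Submodule.sum_mem _ (fun i _ => smulV (x' i) _ (mainκ i)))
  · refine Fin.cases ?_ (fun κ => ?_) i
    · have hidx : (algebraMap F K) (p ((0:Fin (n+1)).castSucc)) = P0 := by
        rw [Fin.castSucc_zero, hP0def]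
      rw [hidx, hP0w]
      exact hWmem
    · have hidx : (algebraMap F K) (p ((Fin.succ κ).castSucc)) = PC κ := by
        rw [hPCdef]
      rw [hidx, hwdef, ← mul_assoc]
      exact mainκ κ


end S12

open QLin in
/-- **Totaro.** Let `p` and `q` be anisotropic quasilinear quadratic forms
of dimension `≥ 2` over a field `F` of characteristic `2`. If `q_{F(p)}` is isotropic,
then `i₀(q_{F(p)}) ≤ dim q − dim p + i₁(p)`. -/
theorem statement12 (F : Type) [Field F] (h2 : (2 : F) = 0) {np nq : ℕ}
    (p : Fin (np + 2) → F) (q : Fin (nq + 2) → F) (hp : Anis F p) (hq : Anis F q)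
    (K : Type) [Field K] [Algebra F K] (hK : IsFunFld F p K)
    (hiso : ¬ Anis K (bc F K q)) :
    (i0 K (bc F K q) : ℤ) ≤ (nq + 2 : ℤ) - (np + 2) + i0 K (bc F K p) := by
  classical
  have h2K : (2:K) = 0 := S12.char2K (F := F) (K := K) h2
  obtain ⟨x, hker, hgen⟩ := hK
  have hqco : ∀ lam : Fin (nq+2) → F, (∑ j, q j * lam j ^ 2) = 0 → lam = 0 :=
    fun lam h => hq lam h
  have hp0 : p 0 ≠ 0 := by
    intro h
    have h1 : QLin.qf F p (Pi.single 0 1) = 0 := by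
      unfold QLin.qf
      rw [Finset.sum_eq_single 0]
      · rw [h]; simp
      · intro b _ hb; rw [Pi.single_eq_of_ne hb]; ring
      · simp
    have h3 := congrFun (hp _ h1) 0
    rw [Pi.single_eq_same] at h3
    exact one_ne_zero h3
  rw [QLin.Anis] at hiso
  push_neg at hiso
  obtain ⟨v, hqv, hv⟩ := hiso
  have hqv' : (∑ j, algebraMap F K (q j) * v j ^ 2) = 0 := hqv
  obtain ⟨w, hw0, hwmem⟩ := S12.heart h2 h2K p q hp0 hqco x hker hgen v hv hqv'
  set Sp := Submodule.span K (Set.range (fun i => S12.tw h2K (QLin.bc F K p i))) with hSp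
  set Sq := Submodule.span K (Set.range (fun i => S12.tw h2K (QLin.bc F K q i))) with hSq
  haveI : FiniteDimensional K Sq := by
    rw [hSq]
    exact FiniteDimensional.span_of_finite K (Set.finite_range _)
  let μw : S12.Tw K h2K →ₗ[K] S12.Tw K h2K :=
    { toFun := fun z => S12.tw h2K (w * S12.untw h2K z)
      map_add' := fun z1 z2 => by
        show S12.tw h2K (w * (S12.untw h2K z1 + S12.untw h2K z2))
          = S12.tw h2K (w * S12.untw h2K z1) + S12.tw h2K (w * S12.untw h2K z2)
        rw [mul_add]
        rfl
      map_smul' := fun c z => by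
        show S12.tw h2K (w * (c^2 * S12.untw h2K z)) = c • S12.tw h2K (w * S12.untw h2K z)
        rw [S12.tw_smul]
        congr 1
        ring }
  have hinj : Function.Injective μw := by
    intro z1 z2 hz
    have hzz : w * S12.untw h2K z1 = w * S12.untw h2K z2 := hz
    have hzz2 : S12.untw h2K z1 = S12.untw h2K z2 := mul_left_cancel₀ hw0 hzz
    exact hzz2
  have hmaple : Submodule.map μw Sp ≤ Sq := by
    rw [hSp, Submodule.map_span, Submodule.span_le]
    rintro _ ⟨_, ⟨ι, rfl⟩, rfl⟩
    have hmem := hwmem ι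
    have heq : μw (S12.tw h2K (QLin.bc F K p ι)) = S12.tw h2K (algebraMap F K (p ι) * w) := by
      show S12.tw h2K (w * S12.untw h2K (S12.tw h2K (QLin.bc F K p ι)))
        = S12.tw h2K (algebraMap F K (p ι) * w)
      rw [mul_comm]
      rfl
    rw [heq]
    exact hmem
  have hfr : Module.finrank K Sp ≤ Module.finrank K Sq := by
    calc Module.finrank K Sp
        = Module.finrank K (Submodule.map μw Sp) :=
          LinearEquiv.finrank_eq (Submodule.equivMapOfInjective μw hinj Sp)
      _ ≤ Module.finrank K Sq := Submodule.finrank_mono hmaple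
  have hq_rn := S12.rank_nullity h2K (QLin.bc F K q)
  have hp_rn := S12.rank_nullity h2K (QLin.bc F K p)
  rw [← hSq] at hq_rn
  rw [← hSp] at hp_rn
  omega
end
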